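/- Let G be a graph obtained from a bipartite graph with parts S and T by adding a matching M of size ℓ (each matching edge joining two vertices in the same part). If k ≥ 4 and ℓ < k(k-1)/2, then every two proper k-colorings of G are Kempe equivalent. -/

import Mathlib

open SimpleGraph

variable {V : Type*}

/-- `c` is a proper `k`-coloring of the simple graph `G`. -/
def IsProperColoring (G : SimpleGraph V) (k : ℕ) (c : V → Fin k) : Prop :=
  ∀ ⦃u v : V⦄, G.Adj u v → c u ≠ c v

/-- The subgraph of `G` spanned by the vertices colored `i` or `j` (all other
vertices are isolated in this graph). -/
def twoColorSub (G : SimpleGraph V) {k : ℕ} (c : V → Fin k) (i j : Fin k) :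
    SimpleGraph V where
  Adj u v := G.Adj u v ∧ (c u = i ∨ c u = j) ∧ (c v = i ∨ c v = j)
  symm := ⟨fun _ _ h => ⟨h.1.symm, h.2.2, h.2.1⟩⟩
  loopless := ⟨fun v h => G.loopless.irrefl v h.1⟩

/-- A single Kempe change: swap the colors `i` and `j` on the connected component
of the `(i,j)`-colored subgraph containing the vertex `v₀`. -/
def KempeStep (G : SimpleGraph V) {k : ℕ} (c c' : V → Fin k) : Prop :=
  ∃ i j : Fin k, i ≠ j ∧ ∃ v₀ : V,
    (∀ v : V, (twoColorSub G c i j).Reachable v₀ v →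
      (c v = i → c' v = j) ∧ (c v = j → c' v = i) ∧ (c v ≠ i → c v ≠ j → c' v = c v)) ∧
    (∀ v : V, ¬ (twoColorSub G c i j).Reachable v₀ v → c' v = c v)

/-- Two colorings are Kempe equivalent if one is obtained from the other by a
finite sequence of Kempe changes. -/
def KempeEquiv (G : SimpleGraph V) {k : ℕ} (c c' : V → Fin k) : Prop :=
  Relation.ReflTransGen (fun a b : V → Fin k => KempeStep G a b) c c'

/-- `G` is obtained from a bipartite graph with parts `S` and `Sᶜ` by adding the
edges of `H`, each of which joins two vertices in the same part. -/
def IsBPlusE (G : SimpleGraph V) (S : Set V) (H : SimpleGraph V) : Prop :=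
  H ≤ G ∧
  (∀ u v : V, G.Adj u v → ¬ H.Adj u v → (u ∈ S ↔ v ∉ S)) ∧
  (∀ u v : V, H.Adj u v → (u ∈ S ↔ v ∈ S))

set_option linter.unusedSectionVars false
set_option linter.unusedVariables false

namespace KempeAux

open Classical in
/-- swap colors `a`,`b` on the set `R`. -/
noncomputable def kswap {k : ℕ} (c : V → Fin k) (a b : Fin k) (R : Set V) : V → Fin k :=
  fun v => if v ∈ R then (if c v = a then b else if c v = b then a else c v) else c v

/-- the Kempe component of `v₀` for the pair `a b`. -/
def RSet (G : SimpleGraph V) {k : ℕ} (c : V → Fin k) (a b : Fin k) (v₀ : V) : Set V :=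
  {v | (twoColorSub G c a b).Reachable v₀ v}

/-- no `H`-edge is colored `(a, b)`. -/
def KFree (H : SimpleGraph V) {k : ℕ} (c : V → Fin k) (a b : Fin k) : Prop :=
  ∀ ⦃u v⦄, H.Adj u v → ¬(c u = a ∧ c v = b)

open Classical in
/-- pointwise update with classical decidability -/
noncomputable def updf {k : ℕ} (c : V → Fin k) (v₀ : V) (j : Fin k) : V → Fin k :=
  fun v => if v = v₀ then j else c v

/-- normal form: side `S` uses colors `A, C`; the complement uses `B, D`; a vertex
colored `C` has a matching partner colored `A`, and one colored `D` a partner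
colored `B`. -/
def NF {k : ℕ} (S : Set V) (H : SimpleGraph V) (c : V → Fin k) (A B C D : Fin k) : Prop :=
  (∀ v ∈ S, c v = A ∨ c v = C) ∧ (∀ v ∉ S, c v = B ∨ c v = D) ∧
  (∀ v, c v = C → ∃ u, H.Adj v u ∧ c u = A) ∧
  (∀ v, c v = D → ∃ u, H.Adj v u ∧ c u = B)

variable {k : ℕ} {G H : SimpleGraph V} {S : Set V} {c d : V → Fin k} {a b : Fin k} {v₀ : V}

lemma kswap_of_mem {R : Set V} {v : V} (h : v ∈ R) :
    kswap c a b R v = if c v = a then b else if c v = b then a else c v := by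
  simp [kswap, h]

lemma kswap_of_not_mem {R : Set V} {v : V} (h : v ∉ R) : kswap c a b R v = c v := by
  simp [kswap, h]

lemma mem_RSet_self : v₀ ∈ RSet G c a b v₀ := ⟨SimpleGraph.Walk.nil⟩

lemma RSet_colors (hv₀ : c v₀ = a ∨ c v₀ = b) :
    ∀ v ∈ RSet G c a b v₀, c v = a ∨ c v = b := by
  intro v hv
  rw [RSet, Set.mem_setOf_eq, reachable_iff_reflTransGen] at hv
  induction hv with
  | refl => exact hv₀
  | tail h1 h2 ih => exact h2.2.2

lemma RSet_closed (hv₀ : c v₀ = a ∨ c v₀ = b) {v w : V} (hv : v ∈ RSet G c a b v₀)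
    (hadj : G.Adj v w) (hw : c w = a ∨ c w = b) : w ∈ RSet G c a b v₀ :=
  Reachable.trans hv (SimpleGraph.Adj.reachable ⟨hadj, RSet_colors hv₀ v hv, hw⟩)

/-- Construct the Kempe step given a pair and a root. -/
lemma kempeStep_kswap (hab : a ≠ b) (v₀ : V) :
    KempeStep G c (kswap c a b (RSet G c a b v₀)) := by
  refine ⟨a, b, hab, v₀, ?_, ?_⟩
  · intro v hv
    have hv' : v ∈ RSet G c a b v₀ := hv
    refine ⟨?_, ?_, ?_⟩
    · intro h1; rw [kswap_of_mem hv', if_pos h1]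
    · intro h1
      rw [kswap_of_mem hv', if_neg (by rw [h1]; exact hab.symm), if_pos h1]
    · intro h1 h2; rw [kswap_of_mem hv', if_neg h1, if_neg h2]
  · intro v hv
    exact kswap_of_not_mem hv

lemma kswap_proper (hc : IsProperColoring G k c) (hab : a ≠ b)
    (hv₀ : c v₀ = a ∨ c v₀ = b) :
    IsProperColoring G k (kswap c a b (RSet G c a b v₀)) := by
  intro u v hadj
  set R := RSet G c a b v₀ with hR
  by_cases hu : u ∈ R <;> by_cases hv : v ∈ R
  · have hcu := RSet_colors hv₀ u hu
    have hcv := RSet_colors hv₀ v hv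
    have hne := hc hadj
    rw [kswap_of_mem hu, kswap_of_mem hv]
    rcases hcu with h1 | h1 <;> rcases hcv with h2 | h2 <;>
      first
        | exact absurd (h1.trans h2.symm) hne
        | simp [h1, h2, hab, hab.symm]
  · have hcv : ¬(c v = a ∨ c v = b) := fun h => hv (RSet_closed hv₀ hu hadj h)
    push_neg at hcv
    have hcu := RSet_colors hv₀ u hu
    rw [kswap_of_mem hu, kswap_of_not_mem hv]
    rcases hcu with h1 | h1 <;> simp [h1, hab, hab.symm] <;>
      [exact fun h => hcv.2 h.symm; exact fun h => hcv.1 h.symm]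
  · have hcu : ¬(c u = a ∨ c u = b) := fun h => hu (RSet_closed hv₀ hv hadj.symm h)
    push_neg at hcu
    have hcv := RSet_colors hv₀ v hv
    rw [kswap_of_not_mem hu, kswap_of_mem hv]
    rcases hcv with h1 | h1 <;> simp [h1, hab, hab.symm] <;>
      [exact hcu.2; exact hcu.1]
  · rw [kswap_of_not_mem hu, kswap_of_not_mem hv]; exact hc hadj


/-- Alternation: on a Kempe component of a free pair, the color determines the side. -/
lemma alternation (hc : IsProperColoring G k c)
    (hcross : ∀ u v : V, G.Adj u v → ¬ H.Adj u v → (u ∈ S ↔ v ∉ S))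
    (hfree : KFree H c a b) :
    ∀ v ∈ RSet G c a b v₀, ((c v = a ↔ v ∈ S) ↔ (c v₀ = a ↔ v₀ ∈ S)) := by
  have edge : ∀ x y : V, (twoColorSub G c a b).Adj x y →
      ((c x = a ↔ x ∈ S) ↔ (c y = a ↔ y ∈ S)) := by
    intro x y ⟨hadj, hx, hy⟩
    have hne : c x ≠ c y := hc hadj
    have hH : ¬ H.Adj x y := by
      intro hH
      rcases hx with h1 | h1 <;> rcases hy with h2 | h2
      · exact hne (h1.trans h2.symm)
      · exact hfree hH ⟨h1, h2⟩
      · exact hfree hH.symm ⟨h2, h1⟩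
      · exact hne (h1.trans h2.symm)
    have hS : x ∈ S ↔ y ∉ S := hcross x y hadj hH
    have hcol : c x = a ↔ ¬ (c y = a) := by
      rcases hx with h1 | h1 <;> rcases hy with h2 | h2 <;>
        simp [h1, h2] at hne ⊢ <;> tauto
    tauto
  intro v hv
  rw [RSet, Set.mem_setOf_eq, reachable_iff_reflTransGen] at hv
  induction hv with
  | refl => exact Iff.rfl
  | tail h1 h2 ih => exact (edge _ _ h2).symm.trans ih

/-- If `v₀` has no neighbor colored `a` or `b`, its component is a singleton. -/
lemma RSet_singleton (hnbr : ∀ w, G.Adj v₀ w → ¬(c w = a ∨ c w = b)) :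
    ∀ v, v ∈ RSet G c a b v₀ → v = v₀ := by
  intro v hv
  rw [RSet, Set.mem_setOf_eq, reachable_iff_reflTransGen] at hv
  rcases hv.cases_head with h | ⟨w, hw, _⟩
  · exact h.symm
  · exact absurd hw.2.2 (hnbr w hw.1)

@[simp] lemma updf_self {j : Fin k} : updf c v₀ j v₀ = j := by simp [updf]

lemma updf_ne {j : Fin k} {v : V} (h : v ≠ v₀) : updf c v₀ j v = c v := by simp [updf, h]

/-- Single-vertex Kempe recoloring. -/
lemma singleStep (hc : IsProperColoring G k c) {x j : Fin k} (hxj : x ≠ j)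
    (hcol : c v₀ = x) (hnbr : ∀ w, G.Adj v₀ w → c w ≠ j) :
    KempeStep G c (updf c v₀ j) ∧ IsProperColoring G k (updf c v₀ j) := by
  have hnbr' : ∀ w, G.Adj v₀ w → ¬(c w = x ∨ c w = j) := by
    intro w hadj h
    rcases h with h | h
    · exact hc hadj (hcol.trans h.symm)
    · exact hnbr w hadj h
  have hsing := RSet_singleton (a := x) (b := j) hnbr'
  constructor
  · refine ⟨x, j, hxj, v₀, ?_, ?_⟩
    · intro v hv
      have hv0 : v = v₀ := hsing v hv
      subst hv0
      exact ⟨fun _ => updf_self, fun h => absurd (hcol.symm.trans h) hxj,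
        fun h _ => absurd hcol h⟩
    · intro v hv
      have hne : v ≠ v₀ := fun h => hv (h ▸ ⟨SimpleGraph.Walk.nil⟩)
      exact updf_ne hne
  · intro u v hadj
    by_cases hu : u = v₀ <;> by_cases hv : v = v₀
    · rw [hu, hv] at hadj; exact absurd hadj (G.loopless.irrefl _)
    · rw [hu, updf_self, updf_ne hv]
      intro h
      exact hnbr v (by rwa [hu] at hadj) h.symm
    · rw [hv, updf_self, updf_ne hu]
      intro h
      exact hnbr u (by rw [hv] at hadj; exact hadj.symm) h
    · rw [updf_ne hu, updf_ne hv]; exact hc hadj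

/-- Kempe steps are symmetric. -/
lemma kempeStep_symm {c d : V → Fin k} (h : KempeStep G c d) : KempeStep G d c := by
  obtain ⟨i, j, hij, v₀, h1, h2⟩ := h
  by_cases hv₀ : c v₀ = i ∨ c v₀ = j
  · have hRcol : ∀ v, (twoColorSub G c i j).Reachable v₀ v → (c v = i ∨ c v = j) :=
      fun v hv => RSet_colors hv₀ v hv
    have hdval : ∀ v, (twoColorSub G c i j).Reachable v₀ v →
        ((c v = i ∧ d v = j) ∨ (c v = j ∧ d v = i)) := by
      intro v hv
      rcases hRcol v hv with h | h
      · exact Or.inl ⟨h, (h1 v hv).1 h⟩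
      · exact Or.inr ⟨h, (h1 v hv).2.1 h⟩
    have hsub : twoColorSub G d i j = twoColorSub G c i j := by
      have key : ∀ v, (d v = i ∨ d v = j) ↔ (c v = i ∨ c v = j) := by
        intro v
        by_cases hv : (twoColorSub G c i j).Reachable v₀ v
        · rcases hdval v hv with ⟨h3, h4⟩ | ⟨h3, h4⟩ <;> simp [h3, h4]
        · rw [h2 v hv]
      ext u v
      show G.Adj u v ∧ _ ↔ G.Adj u v ∧ _
      rw [key u, key v]
    refine ⟨i, j, hij, v₀, ?_, ?_⟩
    · intro v hv
      rw [hsub] at hv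
      rcases hdval v hv with ⟨h3, h4⟩ | ⟨h3, h4⟩
      · exact ⟨fun h => absurd (h4.symm.trans h) hij.symm, fun _ => h3,
          fun _ habs => absurd h4 habs⟩
      · exact ⟨fun _ => h3, fun h => absurd (h4.symm.trans h) hij,
          fun habs _ => absurd h4 habs⟩
    · intro v hv
      rw [hsub] at hv
      exact (h2 v hv).symm
  · push_neg at hv₀
    have hsing : ∀ v, (twoColorSub G c i j).Reachable v₀ v → v = v₀ := by
      intro v hv
      rw [reachable_iff_reflTransGen] at hv
      rcases hv.cases_head with h | ⟨w, hw, _⟩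
      · exact h.symm
      · rcases hw.2.1 with h | h
        · exact absurd h hv₀.1
        · exact absurd h hv₀.2
    have hdc : d = c := by
      funext v
      by_cases hv : (twoColorSub G c i j).Reachable v₀ v
      · have := hsing v hv; subst this
        exact (h1 v hv).2.2 hv₀.1 hv₀.2
      · exact h2 v hv
    subst hdc
    refine ⟨i, j, hij, v₀, ?_, fun v _ => rfl⟩
    intro v hv
    have := hsing v hv; subst this
    exact ⟨fun h => absurd h hv₀.1, fun h => absurd h hv₀.2, fun _ _ => rfl⟩

lemma kempeEquiv_symm {c d : V → Fin k} (h : KempeEquiv G c d) : KempeEquiv G d c := by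
  induction h with
  | refl => exact Relation.ReflTransGen.refl
  | tail h1 h2 ih =>
      show Relation.ReflTransGen _ _ _
      exact Relation.ReflTransGen.trans
        (Relation.ReflTransGen.single (kempeStep_symm h2)) ih

lemma kempeEquiv_trans {c d e : V → Fin k} (h : KempeEquiv G c d) (h' : KempeEquiv G d e) :
    KempeEquiv G c e := Relation.ReflTransGen.trans h h'

/-- Greedy descent: if from every invariant state with positive measure there is a
measure-decreasing Kempe step preserving the invariant, we can reach measure 0. -/
lemma greedy {inv : (V → Fin k) → Prop} {μ : (V → Fin k) → ℕ}
    (h : ∀ d, inv d → μ d ≠ 0 → ∃ e, KempeStep G d e ∧ inv e ∧ μ e < μ d) :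
    ∀ (n : ℕ) (c : V → Fin k), inv c → μ c ≤ n →
      ∃ d, KempeEquiv G c d ∧ inv d ∧ μ d = 0 := by
  intro n
  induction n with
  | zero => exact fun c hc hle => ⟨c, Relation.ReflTransGen.refl, hc, Nat.le_zero.mp hle⟩
  | succ n ih =>
    intro c hc hle
    by_cases h0 : μ c = 0
    · exact ⟨c, Relation.ReflTransGen.refl, hc, h0⟩
    · obtain ⟨e, hstep, hinv, hlt⟩ := h c hc h0
      obtain ⟨d, hd1, hd2, hd3⟩ := ih e hinv (by omega)
      exact ⟨d, Relation.ReflTransGen.trans (Relation.ReflTransGen.single hstep) hd1, hd2, hd3⟩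


/-- Flip an isolated matching edge. -/
lemma pairFlip (hc : IsProperColoring G k c) (hHG : H ≤ G) {u₀ w₀ : V} (hH : H.Adj u₀ w₀)
    {i j : Fin k} (hij : i ≠ j) (hcu : c u₀ = i) (hcw : c w₀ = j)
    (hnu : ∀ x, G.Adj u₀ x → x ≠ w₀ → ¬(c x = i ∨ c x = j))
    (hnw : ∀ x, G.Adj w₀ x → x ≠ u₀ → ¬(c x = i ∨ c x = j)) :
    ∃ e, KempeStep G c e ∧ IsProperColoring G k e ∧
      e u₀ = j ∧ e w₀ = i ∧ ∀ v, v ≠ u₀ → v ≠ w₀ → e v = c v := by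
  have hne : u₀ ≠ w₀ := H.ne_of_adj hH
  have hGuw : G.Adj u₀ w₀ := hHG hH
  refine ⟨updf (updf c u₀ j) w₀ i, ?_, ?_, ?_, ?_, ?_⟩
  rotate_left
  · intro u v hadj
    by_cases hu1 : u = u₀
    · rw [hu1] at hadj ⊢
      by_cases hv2 : v = w₀
      · rw [hv2] at hadj ⊢
        rw [updf_ne hne, updf_self, updf_self]
        exact hij.symm
      · have hv1 : v ≠ u₀ := fun h => G.loopless.irrefl _ (h ▸ hadj)
        rw [updf_ne hne, updf_self, updf_ne hv2, updf_ne hv1]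
        intro h
        exact hnu v hadj hv2 (Or.inr h.symm)
    · by_cases hu2 : u = w₀
      · rw [hu2] at hadj ⊢
        by_cases hv1 : v = u₀
        · rw [hv1] at hadj ⊢
          rw [updf_self, updf_ne hne, updf_self]
          exact hij
        · have hv2 : v ≠ w₀ := fun h => G.loopless.irrefl _ (h ▸ hadj)
          rw [updf_self, updf_ne hv2, updf_ne hv1]
          intro h
          exact hnw v hadj hv1 (Or.inl h.symm)
      · by_cases hv1 : v = u₀
        · rw [hv1] at hadj ⊢
          rw [updf_ne hu2, updf_ne hu1, updf_ne hne, updf_self]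
          intro h
          exact hnu u hadj.symm hu2 (Or.inr h)
        · by_cases hv2 : v = w₀
          · rw [hv2] at hadj ⊢
            rw [updf_ne hu2, updf_ne hu1, updf_self]
            intro h
            exact hnw u hadj.symm hu1 (Or.inl h)
          · rw [updf_ne hu2, updf_ne hu1, updf_ne hv2, updf_ne hv1]
            exact hc hadj
  · rw [updf_ne hne, updf_self]
  · rw [updf_self]
  · intro v hv1 hv2; rw [updf_ne hv2, updf_ne hv1]
  · -- the Kempe step
    have hsub : ∀ v, (twoColorSub G c i j).Reachable u₀ v → v = u₀ ∨ v = w₀ := by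
      intro v hv
      rw [reachable_iff_reflTransGen] at hv
      induction hv with
      | refl => exact Or.inl rfl
      | tail h1 h2 ih =>
        rename_i x y
        rcases ih with rfl | rfl
        · by_cases hy : y = w₀
          · exact Or.inr hy
          · exact absurd h2.2.2 (hnu y h2.1 hy)
        · by_cases hy : y = u₀
          · exact Or.inl hy
          · exact absurd h2.2.2 (hnw y h2.1 hy)
    refine ⟨i, j, hij, u₀, ?_, ?_⟩
    · intro v hv
      rcases hsub v hv with rfl | rfl
      · refine ⟨fun _ => ?_, fun h => absurd (hcu.symm.trans h) hij, fun h _ => absurd hcu h⟩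
        rw [updf_ne hne, updf_self]
      · refine ⟨fun h => absurd (hcw.symm.trans h) hij.symm, fun _ => ?_,
          fun _ h => absurd hcw h⟩
        rw [updf_self]
    · intro v hv
      have hv1 : v ≠ u₀ := fun h => hv (h ▸ Reachable.refl _)
      have hv2 : v ≠ w₀ := by
        intro h
        exact hv (h ▸ (SimpleGraph.Adj.reachable ⟨hGuw, Or.inl hcu, Or.inr hcw⟩))
      rw [updf_ne hv2, updf_ne hv1]

/-- Polarize a free pair: make `a` appear only on `S` and `b` only off `S`. -/
lemma polarize [Fintype V] (hHG : H ≤ G)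
    (hcross : ∀ u v : V, G.Adj u v → ¬ H.Adj u v → (u ∈ S ↔ v ∉ S))
    (hc : IsProperColoring G k c) (hab : a ≠ b) (hfree : KFree H c a b) :
    ∃ d, KempeEquiv G c d ∧ IsProperColoring G k d ∧
      (∀ v, d v = c v ∨ ((c v = a ∨ c v = b) ∧ (d v = a ∨ d v = b))) ∧
      (∀ v ∈ S, d v ≠ b) ∧ (∀ v ∉ S, d v ≠ a) := by
  classical
  set inv : (V → Fin k) → Prop := fun d => IsProperColoring G k d ∧
    (∀ v, d v = c v ∨ ((c v = a ∨ c v = b) ∧ (d v = a ∨ d v = b))) with hinv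
  set bad : (V → Fin k) → Set V := fun d => {v | (v ∈ S ∧ d v = b) ∨ (v ∉ S ∧ d v = a)}
    with hbad
  have hKFree : ∀ d, inv d → KFree H d a b := by
    intro d hd u v hH ⟨h1, h2⟩
    have hu : c u = a ∨ c u = b := by
      rcases hd.2 u with h | h
      · exact Or.inl (h ▸ h1)
      · exact h.1
    have hv : c v = a ∨ c v = b := by
      rcases hd.2 v with h | h
      · exact Or.inr (h ▸ h2)
      · exact h.1
    have hne := hc (hHG hH)
    rcases hu with h3 | h3 <;> rcases hv with h4 | h4
    · exact hne (h3.trans h4.symm)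
    · exact hfree hH ⟨h3, h4⟩
    · exact hfree hH.symm ⟨h4, h3⟩
    · exact hne (h3.trans h4.symm)
  have hstep : ∀ d, inv d → (bad d).ncard ≠ 0 →
      ∃ e, KempeStep G d e ∧ inv e ∧ (bad e).ncard < (bad d).ncard := by
    intro d hd hμ
    obtain ⟨v₀, hv₀bad⟩ := Set.nonempty_of_ncard_ne_zero hμ
    have hv₀col : d v₀ = a ∨ d v₀ = b := by
      rcases hv₀bad with ⟨_, h⟩ | ⟨_, h⟩
      · exact Or.inr h
      · exact Or.inl h
    set R := RSet G d a b v₀ with hR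
    refine ⟨kswap d a b R, kempeStep_kswap hab v₀, ⟨kswap_proper hd.1 hab hv₀col, ?_⟩, ?_⟩
    · intro v
      by_cases hv : v ∈ R
      · have hcol := RSet_colors hv₀col v hv
        have hcv : c v = a ∨ c v = b := by
          rcases hd.2 v with h | h
          · exact h ▸ hcol
          · exact h.1
        refine Or.inr ⟨hcv, ?_⟩
        rw [kswap_of_mem hv]
        rcases hcol with h | h <;> simp [h, hab]
      · rw [kswap_of_not_mem hv]
        exact hd.2 v
    · -- measure decreases
      have hq0 : ¬(d v₀ = a ↔ v₀ ∈ S) := by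
        rcases hv₀bad with ⟨h1, h2⟩ | ⟨h1, h2⟩
        · rw [h2]; intro h; exact hab.symm (h.mpr h1)
        · rw [h2]; intro h; exact h1 (h.mp rfl)
      have halt := alternation hd.1 hcross (hKFree d hd) (v₀ := v₀)
      have hgoodR : ∀ v ∈ R, v ∉ bad (kswap d a b R) := by
        intro v hvR hvbad
        have hq : ¬(d v = a ↔ v ∈ S) := by
          intro h
          exact hq0 ((halt v hvR).mp h)
        have hcol := RSet_colors hv₀col v hvR
        rcases hvbad with ⟨h1, h2⟩ | ⟨h1, h2⟩
        · -- v ∈ S, kswap v = b, so d v = a, contradiction with hq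
          have : d v = a := by
            rcases hcol with h | h
            · exact h
            · rw [kswap_of_mem hvR, if_neg (by rw [h]; exact hab.symm), if_pos h] at h2
              exact absurd h2 hab
          exact hq (by simp [this, h1])
        · have : d v = b := by
            rcases hcol with h | h
            · rw [kswap_of_mem hvR, if_pos h] at h2
              exact absurd h2.symm hab
            · exact h
          refine hq ?_
          constructor
          · intro h; exact absurd (h.symm.trans this) hab
          · intro h; exact absurd h h1
      have hsubset : bad (kswap d a b R) ⊆ bad d \ {v₀} := by
        intro v hv
        by_cases hvR : v ∈ R
        · exact absurd hv (hgoodR v hvR)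
        · have heq : kswap d a b R v = d v := kswap_of_not_mem hvR
          have : v ∈ bad d := by
            rcases hv with ⟨h1, h2⟩ | ⟨h1, h2⟩
            · exact Or.inl ⟨h1, heq ▸ h2⟩
            · exact Or.inr ⟨h1, heq ▸ h2⟩
          refine ⟨this, ?_⟩
          simp only [Set.mem_singleton_iff]
          rintro rfl
          exact hvR (Reachable.refl _)
      have hnotin : v₀ ∉ bad (kswap d a b R) := fun h => (hsubset h).2 rfl
      have hss : bad (kswap d a b R) ⊂ bad d :=
        (Set.ssubset_iff_of_subset (hsubset.trans Set.diff_subset)).mpr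
          ⟨v₀, hv₀bad, hnotin⟩
      exact Set.ncard_lt_ncard hss (Set.toFinite _)
  obtain ⟨d, hd1, hd2, hd3⟩ := greedy hstep ((bad c).ncard) c
    ⟨hc, fun v => Or.inl rfl⟩ le_rfl
  have hempty : bad d = ∅ := (Set.ncard_eq_zero (Set.toFinite _)).mp hd3
  refine ⟨d, hd1, hd2.1, hd2.2, ?_, ?_⟩
  · intro v hv h
    have : v ∈ bad d := Or.inl ⟨hv, h⟩
    rw [hempty] at this; exact this
  · intro v hv h
    have : v ∈ bad d := Or.inr ⟨hv, h⟩
    rw [hempty] at this; exact this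

/-- Pigeonhole: some pair of colors appears on no `H`-edge. -/
lemma exists_free_pair [Fintype V] (hHG : H ≤ G) (hc : IsProperColoring G k c)
    {ℓ : ℕ} (hcard : H.edgeSet.ncard = ℓ) (hℓ : ℓ < k * (k - 1) / 2) :
    ∃ a b : Fin k, a ≠ b ∧ KFree H c a b := by
  classical
  set P : Set (Sym2 (Fin k)) := Sym2.map c '' H.edgeSet with hP
  have h1 : P.ncard ≤ ℓ := hcard ▸ Set.ncard_image_le (Set.toFinite _)
  set ND : Set (Sym2 (Fin k)) := {z | ¬ z.IsDiag} with hND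
  have h2 : ND.ncard = k * (k - 1) / 2 := by
    have e1 : ND.ncard = Fintype.card {z : Sym2 (Fin k) // ¬ z.IsDiag} := by
      rw [Set.ncard_eq_toFinset_card', Set.toFinset_card]
      exact Fintype.card_congr (Equiv.subtypeEquivRight (fun z => Iff.rfl))
    rw [e1, Sym2.card_subtype_not_diag, Fintype.card_fin, Nat.choose_two_right]
  have h3 : P.ncard < ND.ncard := lt_of_le_of_lt h1 (h2 ▸ hℓ)
  obtain ⟨z, hzND, hzP⟩ := Set.exists_mem_notMem_of_ncard_lt_ncard h3 (Set.toFinite _)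
  induction z using Sym2.ind with
  | _ a b =>
    refine ⟨a, b, fun h => hzND (Sym2.mk_isDiag_iff.mpr h), ?_⟩
    intro u v hH ⟨h4, h5⟩
    refine hzP ⟨s(u, v), H.mem_edgeSet.mpr hH, ?_⟩
    rw [Sym2.map_pair_eq, h4, h5]

/-- Any vertex not of side `P` keeps its color; any side-`P` vertex becomes `β`
unless its matching partner is colored `β`. -/
lemma compressSide [Fintype V] {P : V → Prop}
    (hPside : ∀ u v, G.Adj u v → (P u ↔ P v) → H.Adj u v)
    (hc : IsProperColoring G k c) {β : Fin k} (hpolar : ∀ v, ¬P v → c v ≠ β) :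
    ∃ d, KempeEquiv G c d ∧ IsProperColoring G k d ∧
      (∀ v, ¬P v → d v = c v) ∧ (∀ v, P v → d v = β ∨ d v = c v) ∧
      (∀ v, P v → d v ≠ β → ∃ u, H.Adj v u ∧ d u = β) := by
  classical
  set inv : (V → Fin k) → Prop := fun d => IsProperColoring G k d ∧
    (∀ v, ¬P v → d v = c v) ∧ (∀ v, P v → d v = β ∨ d v = c v) with hinv
  set bad : (V → Fin k) → Set V :=
    fun d => {v | P v ∧ d v ≠ β ∧ ¬∃ u, H.Adj v u ∧ d u = β} with hbad
  have hstep : ∀ d, inv d → (bad d).ncard ≠ 0 →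
      ∃ e, KempeStep G d e ∧ inv e ∧ (bad e).ncard < (bad d).ncard := by
    intro d hd hμ
    obtain ⟨v₀, hP₀, hnβ, hnopart⟩ := Set.nonempty_of_ncard_ne_zero hμ
    have hnbr : ∀ w, G.Adj v₀ w → d w ≠ β := by
      intro w hadj hwβ
      by_cases hPw : P w
      · exact hnopart ⟨w, hPside v₀ w hadj (iff_of_true hP₀ hPw), hwβ⟩
      · exact hpolar w hPw (by rw [← hd.2.1 w hPw]; exact hwβ)
    obtain ⟨hks, hprop⟩ := singleStep hd.1 hnβ rfl hnbr
    refine ⟨updf d v₀ β, hks, ⟨hprop, ?_, ?_⟩, ?_⟩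
    · intro v hv
      rw [updf_ne (fun h => hv (by rw [h]; exact hP₀))]
      exact hd.2.1 v hv
    · intro v hv
      by_cases hveq : v = v₀
      · subst hveq; exact Or.inl updf_self
      · rw [updf_ne hveq]; exact hd.2.2 v hv
    · have hsubset : bad (updf d v₀ β) ⊆ bad d \ {v₀} := by
        intro v ⟨h1, h2, h3⟩
        have hne : v ≠ v₀ := by
          intro h; subst h; exact h2 updf_self
        rw [updf_ne hne] at h2
        refine ⟨⟨h1, h2, ?_⟩, by simpa using hne⟩
        rintro ⟨u, hu1, hu2⟩
        by_cases hueq : u = v₀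
        · exact h3 ⟨u, hu1, by rw [hueq, updf_self]⟩
        · exact h3 ⟨u, hu1, by rwa [updf_ne hueq]⟩
      have hnotin : v₀ ∉ bad (updf d v₀ β) := by
        intro ⟨_, h2, _⟩
        exact h2 updf_self
      have hss : bad (updf d v₀ β) ⊂ bad d :=
        (Set.ssubset_iff_of_subset (hsubset.trans Set.diff_subset)).mpr
          ⟨v₀, ⟨hP₀, hnβ, hnopart⟩, hnotin⟩
      exact Set.ncard_lt_ncard hss (Set.toFinite _)
  obtain ⟨d, hd1, hd2, hd3⟩ := greedy hstep ((bad c).ncard) c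
    ⟨hc, fun _ _ => rfl, fun _ _ => Or.inr rfl⟩ le_rfl
  have hempty : bad d = ∅ := (Set.ncard_eq_zero (Set.toFinite _)).mp hd3
  refine ⟨d, hd1, hd2.1, hd2.2.1, hd2.2.2, ?_⟩
  intro v hv1 hv2
  by_contra hno
  have : v ∈ bad d := ⟨hv1, hv2, hno⟩
  rw [hempty] at this
  exact this

/-- Retarget the non-`α` endpoints of side-`P` matching edges to `σ`. -/
lemma retargetSide [Fintype V] {P : V → Prop}
    (hPside : ∀ u v, G.Adj u v → (P u ↔ P v) → H.Adj u v)
    (hmatch : ∀ u v w : V, H.Adj u v → H.Adj u w → v = w)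
    (hc : IsProperColoring G k c) {α σ : Fin k} (hne : α ≠ σ)
    (hcov : ∀ v, P v → c v = α ∨ ∃ u, H.Adj v u ∧ c u = α)
    (hσpolar : ∀ v, ¬P v → c v ≠ σ) :
    ∃ d, KempeEquiv G c d ∧ IsProperColoring G k d ∧
      (∀ v, ¬P v → d v = c v) ∧ (∀ v, P v → d v = α ∨ d v = σ) ∧
      (∀ v, d v = σ → ∃ u, H.Adj v u ∧ d u = α) := by
  classical
  set inv : (V → Fin k) → Prop := fun d => IsProperColoring G k d ∧
    (∀ v, d v = c v ∨ (P v ∧ d v = σ ∧ c v ≠ α)) with hinv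
  set bad : (V → Fin k) → Set V := fun d => {v | P v ∧ d v ≠ α ∧ d v ≠ σ} with hbad
  have hstep : ∀ d, inv d → (bad d).ncard ≠ 0 →
      ∃ e, KempeStep G d e ∧ inv e ∧ (bad e).ncard < (bad d).ncard := by
    intro d hd hμ
    obtain ⟨v₀, hP₀, hnα, hnσ⟩ := Set.nonempty_of_ncard_ne_zero hμ
    have hdc : d v₀ = c v₀ := by
      rcases hd.2 v₀ with h | ⟨_, h, _⟩
      · exact h
      · exact absurd h hnσ
    have hcα : c v₀ ≠ α := hdc ▸ hnα
    obtain ⟨u₀, hu₀H, hu₀α⟩ := (hcov v₀ hP₀).resolve_left hcα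
    have hdu₀ : d u₀ = α := by
      rcases hd.2 u₀ with h | ⟨_, _, h⟩
      · exact h ▸ hu₀α
      · exact absurd hu₀α h
    have hnbr : ∀ w, G.Adj v₀ w → d w ≠ σ := by
      intro w hadj hwσ
      by_cases hPw : P w
      · have hHw : H.Adj v₀ w := hPside v₀ w hadj (iff_of_true hP₀ hPw)
        have : w = u₀ := hmatch v₀ w u₀ hHw hu₀H
        rw [this, hdu₀] at hwσ
        exact hne hwσ
      · rcases hd.2 w with h | ⟨h, _, _⟩
        · exact hσpolar w hPw (h ▸ hwσ)
        · exact hPw h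
    obtain ⟨hks, hprop⟩ := singleStep hd.1 hnσ rfl hnbr
    refine ⟨updf d v₀ σ, hks, ⟨hprop, ?_⟩, ?_⟩
    · intro v
      by_cases hveq : v = v₀
      · subst hveq
        exact Or.inr ⟨hP₀, updf_self, hcα⟩
      · rw [updf_ne hveq]; exact hd.2 v
    · have hsubset : bad (updf d v₀ σ) ⊆ bad d \ {v₀} := by
        intro v ⟨h1, h2, h3⟩
        have hvne : v ≠ v₀ := by
          intro h; subst h; exact h3 updf_self
        rw [updf_ne hvne] at h2 h3
        exact ⟨⟨h1, h2, h3⟩, by simpa using hvne⟩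
      have hnotin : v₀ ∉ bad (updf d v₀ σ) := by
        intro ⟨_, _, h3⟩
        exact h3 updf_self
      have hss : bad (updf d v₀ σ) ⊂ bad d :=
        (Set.ssubset_iff_of_subset (hsubset.trans Set.diff_subset)).mpr
          ⟨v₀, ⟨hP₀, hnα, hnσ⟩, hnotin⟩
      exact Set.ncard_lt_ncard hss (Set.toFinite _)
  obtain ⟨d, hd1, hd2, hd3⟩ := greedy hstep ((bad c).ncard) c
    ⟨hc, fun _ => Or.inl rfl⟩ le_rfl
  have hempty : bad d = ∅ := (Set.ncard_eq_zero (Set.toFinite _)).mp hd3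
  have hgood : ∀ v, P v → d v = α ∨ d v = σ := by
    intro v hv
    by_contra hno
    push_neg at hno
    have : v ∈ bad d := ⟨hv, hno.1, hno.2⟩
    rw [hempty] at this
    exact this
  have hfix : ∀ v, ¬P v → d v = c v := by
    intro v hv
    rcases hd2.2 v with h | ⟨h, _, _⟩
    · exact h
    · exact absurd h hv
  refine ⟨d, hd1, hd2.1, hfix, hgood, ?_⟩
  intro v hvσ
  have hPv : P v := by
    by_contra hPv
    exact hσpolar v hPv ((hfix v hPv) ▸ hvσ)
  have hcv : c v ≠ α := by
    rcases hd2.2 v with h | ⟨_, _, h⟩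
    · intro hvα
      exact hne (hvα.symm.trans (h.symm.trans hvσ))
    · exact h
  obtain ⟨u, huH, huα⟩ := (hcov v hPv).resolve_left hcv
  refine ⟨u, huH, ?_⟩
  rcases hd2.2 u with h | ⟨_, _, h⟩
  · exact h ▸ huα
  · exact absurd huα h

/-- rename a color `y` to a globally unused color `x`. -/
lemma renameColor [Fintype V] (hc : IsProperColoring G k c) {x y : Fin k}
    (hyx : y ≠ x) (hx : ∀ v, c v ≠ x) :
    ∃ d, KempeEquiv G c d ∧ IsProperColoring G k d ∧
      (∀ v, d v = if c v = y then x else c v) := by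
  classical
  set inv : (V → Fin k) → Prop := fun d => IsProperColoring G k d ∧
    (∀ v, d v = c v ∨ (c v = y ∧ d v = x)) with hinv
  set bad : (V → Fin k) → Set V := fun d => {v | d v = y} with hbad
  have hstep : ∀ d, inv d → (bad d).ncard ≠ 0 →
      ∃ e, KempeStep G d e ∧ inv e ∧ (bad e).ncard < (bad d).ncard := by
    intro d hd hμ
    obtain ⟨v₀, hv₀⟩ := Set.nonempty_of_ncard_ne_zero hμ
    have hv₀y : d v₀ = y := hv₀
    have hcv₀ : c v₀ = y := by
      rcases hd.2 v₀ with h | ⟨h, _⟩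
      · exact h ▸ hv₀y
      · exact h
    have hnbr : ∀ w, G.Adj v₀ w → d w ≠ x := by
      intro w hadj hwx
      have hcw : c w = y := by
        rcases hd.2 w with h | ⟨h, _⟩
        · exact absurd (h ▸ hwx) (hx w)
        · exact h
      exact hc hadj (hcv₀.trans hcw.symm)
    obtain ⟨hks, hprop⟩ := singleStep hd.1 hyx hv₀y hnbr
    refine ⟨updf d v₀ x, hks, ⟨hprop, ?_⟩, ?_⟩
    · intro v
      by_cases hveq : v = v₀
      · subst hveq; exact Or.inr ⟨hcv₀, updf_self⟩
      · rw [updf_ne hveq]; exact hd.2 v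
    · have hsubset : bad (updf d v₀ x) ⊆ bad d \ {v₀} := by
        intro v hv
        have hvne : v ≠ v₀ := by
          intro h; subst h
          rw [hbad] at hv
          exact hyx ((updf_self).symm.trans hv).symm
        rw [hbad, Set.mem_setOf_eq, updf_ne hvne] at hv
        exact ⟨hv, by simpa using hvne⟩
      have hnotin : v₀ ∉ bad (updf d v₀ x) := by
        intro hv
        rw [hbad, Set.mem_setOf_eq, updf_self] at hv
        exact hyx hv.symm
      have hss : bad (updf d v₀ x) ⊂ bad d :=
        (Set.ssubset_iff_of_subset (hsubset.trans Set.diff_subset)).mpr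
          ⟨v₀, hv₀, hnotin⟩
      exact Set.ncard_lt_ncard hss (Set.toFinite _)
  obtain ⟨d, hd1, hd2, hd3⟩ := greedy hstep ((bad c).ncard) c
    ⟨hc, fun _ => Or.inl rfl⟩ le_rfl
  have hempty : bad d = ∅ := (Set.ncard_eq_zero (Set.toFinite _)).mp hd3
  refine ⟨d, hd1, hd2.1, ?_⟩
  intro v
  by_cases hv : c v = y
  · rw [if_pos hv]
    rcases hd2.2 v with h | ⟨_, h⟩
    · exfalso
      have : v ∈ bad d := by rw [hbad, Set.mem_setOf_eq, h]; exact hv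
      rw [hempty] at this; exact this
    · exact h
  · rw [if_neg hv]
    rcases hd2.2 v with h | ⟨h, _⟩
    · exact h
    · exact absurd h hv

/-- transport `NF` along a rename. -/
lemma NF.rename {A B C D x y : Fin k} (hNF : NF S H c A B C D)
    (hd : ∀ v, d v = if c v = y then x else c v)
    (hA : A ≠ x) (hB : B ≠ x) (hC : C ≠ x) (hD : D ≠ x) :
    NF S H d (if A = y then x else A) (if B = y then x else B)
      (if C = y then x else C) (if D = y then x else D) := by
  set r : Fin k → Fin k := fun z => if z = y then x else z with hr
  have hrd : ∀ v, d v = r (c v) := hd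
  have hinj : ∀ p q : Fin k, p ≠ x → q ≠ x → r p = r q → p = q := by
    intro p q hp hq h
    simp only [hr] at h
    by_cases hp1 : p = y <;> by_cases hq1 : q = y
    · rw [hp1, hq1]
    · rw [if_pos hp1, if_neg hq1] at h
      exact absurd h.symm hq
    · rw [if_neg hp1, if_pos hq1] at h
      exact absurd h hp
    · rwa [if_neg hp1, if_neg hq1] at h
  obtain ⟨h1, h2, h3, h4⟩ := hNF
  refine ⟨?_, ?_, ?_, ?_⟩
  · intro v hv
    rcases h1 v hv with h | h <;> rw [hrd v, h]
    · exact Or.inl rfl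
    · exact Or.inr rfl
  · intro v hv
    rcases h2 v hv with h | h <;> rw [hrd v, h]
    · exact Or.inl rfl
    · exact Or.inr rfl
  · intro v hv
    have hcv : c v = C := by
      have hcv' : c v = A ∨ c v = B ∨ c v = C ∨ c v = D := by
        by_cases hvS : v ∈ S
        · rcases h1 v hvS with h | h
          · exact Or.inl h
          · exact Or.inr (Or.inr (Or.inl h))
        · rcases h2 v hvS with h | h
          · exact Or.inr (Or.inl h)
          · exact Or.inr (Or.inr (Or.inr h))
      rw [hrd v] at hv
      rcases hcv' with h | h | h | h <;> rw [h] at hv ⊢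
      · exact hinj A C hA hC hv
      · exact hinj B C hB hC hv
      · exact hinj D C hD hC hv
    obtain ⟨u, hu1, hu2⟩ := h3 v hcv
    exact ⟨u, hu1, by rw [hrd u, hu2]⟩
  · intro v hv
    have hcv : c v = D := by
      have hcv' : c v = A ∨ c v = B ∨ c v = C ∨ c v = D := by
        by_cases hvS : v ∈ S
        · rcases h1 v hvS with h | h
          · exact Or.inl h
          · exact Or.inr (Or.inr (Or.inl h))
        · rcases h2 v hvS with h | h
          · exact Or.inr (Or.inl h)
          · exact Or.inr (Or.inr (Or.inr h))
      rw [hrd v] at hv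
      rcases hcv' with h | h | h | h <;> rw [h] at hv ⊢
      · exact hinj A D hA hD hv
      · exact hinj B D hB hD hv
      · exact hinj C D hC hD hv
    obtain ⟨u, hu1, hu2⟩ := h4 v hcv
    exact ⟨u, hu1, by rw [hrd u, hu2]⟩

section Gswaps
variable [Fintype V] {A B C D : Fin k}

lemma NF.not_S_of_B (hNF : NF S H c A B C D) (hAB : A ≠ B) (hBC : B ≠ C)
    {v : V} (h : c v = B) : v ∉ S := by
  intro hv
  rcases hNF.1 v hv with h' | h'
  · exact hAB (h'.symm.trans h)
  · exact hBC (h.symm.trans h')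

lemma NF.not_S_of_D (hNF : NF S H c A B C D) (hAD : A ≠ D) (hCD : C ≠ D)
    {v : V} (h : c v = D) : v ∉ S := by
  intro hv
  rcases hNF.1 v hv with h' | h'
  · exact hAD (h'.symm.trans h)
  · exact hCD (h.symm.trans h').symm

lemma NF.S_of_A (hNF : NF S H c A B C D) (hAB : A ≠ B) (hAD : A ≠ D)
    {v : V} (h : c v = A) : v ∈ S := by
  by_contra hv
  rcases hNF.2.1 v hv with h' | h'
  · exact hAB (h.symm.trans h')
  · exact hAD (h.symm.trans h')

lemma NF.S_of_C (hNF : NF S H c A B C D) (hBC : B ≠ C) (hCD : C ≠ D)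
    {v : V} (h : c v = C) : v ∈ S := by
  by_contra hv
  rcases hNF.2.1 v hv with h' | h'
  · exact hBC (h.symm.trans h').symm
  · exact hCD (h.symm.trans h')

/-- swap the roles of `A` (side `S`) and `B` (side `Sᶜ`). -/
lemma gswapAB (hHG : H ≤ G)
    (hcross : ∀ u v : V, G.Adj u v → ¬ H.Adj u v → (u ∈ S ↔ v ∉ S))
    (hside : ∀ u v : V, H.Adj u v → (u ∈ S ↔ v ∈ S))
    (hc : IsProperColoring G k c) (hAB : A ≠ B) (hAC : A ≠ C) (hAD : A ≠ D)
    (hBC : B ≠ C) (hBD : B ≠ D) (hCD : C ≠ D) (hNF : NF S H c A B C D) :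
    ∃ d, KempeEquiv G c d ∧ IsProperColoring G k d ∧ NF S H d B A C D := by
  have hfree : KFree H c B A := by
    intro u v hH ⟨h1, h2⟩
    exact (hNF.not_S_of_B hAB hBC h1) ((hside u v hH).mpr (hNF.S_of_A hAB hAD h2))
  obtain ⟨d, he, hp, hmaster, hpolS, hpolT⟩ := polarize hHG hcross hc hAB.symm hfree
  have hval : ∀ v, (c v = A → d v = B) ∧ (c v = B → d v = A) ∧
      (c v ≠ A → c v ≠ B → d v = c v) := by
    intro v
    refine ⟨?_, ?_, ?_⟩
    · intro h
      rcases hmaster v with h' | ⟨_, h'⟩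
      · exact absurd (h ▸ h') (hpolS v (hNF.S_of_A hAB hAD h))
      · exact h'.resolve_right (hpolS v (hNF.S_of_A hAB hAD h))
    · intro h
      rcases hmaster v with h' | ⟨_, h'⟩
      · exact absurd (h ▸ h') (hpolT v (hNF.not_S_of_B hAB hBC h))
      · exact h'.resolve_left (hpolT v (hNF.not_S_of_B hAB hBC h))
    · intro h1 h2
      rcases hmaster v with h' | ⟨h', _⟩
      · exact h'
      · rcases h' with h' | h'
        · exact absurd h' h2
        · exact absurd h' h1
  refine ⟨d, he, hp, ?_, ?_, ?_, ?_⟩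
  · intro v hv
    rcases hNF.1 v hv with h | h
    · exact Or.inl ((hval v).1 h)
    · exact Or.inr (((hval v).2.2 (fun h' => hAC (h'.symm.trans h))
        (fun h' => hBC (h'.symm.trans h))).trans h)
  · intro v hv
    rcases hNF.2.1 v hv with h | h
    · exact Or.inl ((hval v).2.1 h)
    · exact Or.inr (((hval v).2.2 (fun h' => hAD (h'.symm.trans h))
        (fun h' => hBD (h'.symm.trans h))).trans h)
  · intro v hv
    have hcv : c v = C := by
      by_cases h1 : c v = A
      · exact absurd (((hval v).1 h1).symm.trans hv) hBC
      · by_cases h2 : c v = B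
        · exact absurd (((hval v).2.1 h2).symm.trans hv) hAC
        · exact ((hval v).2.2 h1 h2).symm.trans hv
    obtain ⟨u, hu1, hu2⟩ := hNF.2.2.1 v hcv
    exact ⟨u, hu1, (hval u).1 hu2⟩
  · intro v hv
    have hcv : c v = D := by
      by_cases h1 : c v = A
      · exact absurd (((hval v).1 h1).symm.trans hv) hBD
      · by_cases h2 : c v = B
        · exact absurd (((hval v).2.1 h2).symm.trans hv) hAD
        · exact ((hval v).2.2 h1 h2).symm.trans hv
    obtain ⟨u, hu1, hu2⟩ := hNF.2.2.2 v hcv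
    exact ⟨u, hu1, (hval u).2.1 hu2⟩

/-- swap the roles of `B` (side `Sᶜ`) and `C` (side `S`). -/
lemma gswapBC (hHG : H ≤ G)
    (hcross : ∀ u v : V, G.Adj u v → ¬ H.Adj u v → (u ∈ S ↔ v ∉ S))
    (hside : ∀ u v : V, H.Adj u v → (u ∈ S ↔ v ∈ S))
    (hc : IsProperColoring G k c) (hAB : A ≠ B) (hAC : A ≠ C) (hAD : A ≠ D)
    (hBC : B ≠ C) (hBD : B ≠ D) (hCD : C ≠ D) (hNF : NF S H c A B C D) :
    ∃ d, KempeEquiv G c d ∧ IsProperColoring G k d ∧ NF S H d A C B D := by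
  have hfree : KFree H c B C := by
    intro u v hH ⟨h1, h2⟩
    exact (hNF.not_S_of_B hAB hBC h1) ((hside u v hH).mpr (hNF.S_of_C hBC hCD h2))
  obtain ⟨d, he, hp, hmaster, hpolS, hpolT⟩ := polarize hHG hcross hc hBC hfree
  have hval : ∀ v, (c v = B → d v = C) ∧ (c v = C → d v = B) ∧
      (c v ≠ B → c v ≠ C → d v = c v) := by
    intro v
    refine ⟨?_, ?_, ?_⟩
    · intro h
      rcases hmaster v with h' | ⟨_, h'⟩
      · exact absurd (h ▸ h') (hpolT v (hNF.not_S_of_B hAB hBC h))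
      · exact h'.resolve_left (hpolT v (hNF.not_S_of_B hAB hBC h))
    · intro h
      rcases hmaster v with h' | ⟨_, h'⟩
      · exact absurd (h ▸ h') (hpolS v (hNF.S_of_C hBC hCD h))
      · exact h'.resolve_right (hpolS v (hNF.S_of_C hBC hCD h))
    · intro h1 h2
      rcases hmaster v with h' | ⟨h', _⟩
      · exact h'
      · rcases h' with h' | h'
        · exact absurd h' h1
        · exact absurd h' h2
  refine ⟨d, he, hp, ?_, ?_, ?_, ?_⟩
  · intro v hv
    rcases hNF.1 v hv with h | h
    · exact Or.inl (((hval v).2.2 (fun h' => hAB (h.symm.trans h'))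
        (fun h' => hAC (h.symm.trans h'))).trans h)
    · exact Or.inr ((hval v).2.1 h)
  · intro v hv
    rcases hNF.2.1 v hv with h | h
    · exact Or.inl ((hval v).1 h)
    · exact Or.inr (((hval v).2.2 (fun h' => hBD (h'.symm.trans h))
        (fun h' => hCD (h'.symm.trans h))).trans h)
  · intro v hv
    have hcv : c v = C := by
      by_cases h1 : c v = B
      · exact absurd (((hval v).1 h1).symm.trans hv) hBC.symm
      · by_cases h2 : c v = C
        · exact h2
        · exact absurd (((hval v).2.2 h1 h2).symm.trans hv) h1
    obtain ⟨u, hu1, hu2⟩ := hNF.2.2.1 v hcv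
    refine ⟨u, hu1, ?_⟩
    exact ((hval u).2.2 (fun h' => hAB (hu2.symm.trans h'))
      (fun h' => hAC (hu2.symm.trans h'))).trans hu2
  · intro v hv
    have hcv : c v = D := by
      by_cases h1 : c v = B
      · exact absurd (((hval v).1 h1).symm.trans hv) hCD
      · by_cases h2 : c v = C
        · exact absurd (((hval v).2.1 h2).symm.trans hv) hBD
        · exact ((hval v).2.2 h1 h2).symm.trans hv
    obtain ⟨u, hu1, hu2⟩ := hNF.2.2.2 v hcv
    exact ⟨u, hu1, (hval u).1 hu2⟩

/-- swap the roles of `C` (side `S`) and `D` (side `Sᶜ`). -/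
lemma gswapCD (hHG : H ≤ G)
    (hcross : ∀ u v : V, G.Adj u v → ¬ H.Adj u v → (u ∈ S ↔ v ∉ S))
    (hside : ∀ u v : V, H.Adj u v → (u ∈ S ↔ v ∈ S))
    (hc : IsProperColoring G k c) (hAB : A ≠ B) (hAC : A ≠ C) (hAD : A ≠ D)
    (hBC : B ≠ C) (hBD : B ≠ D) (hCD : C ≠ D) (hNF : NF S H c A B C D) :
    ∃ d, KempeEquiv G c d ∧ IsProperColoring G k d ∧ NF S H d A B D C := by
  have hfree : KFree H c D C := by
    intro u v hH ⟨h1, h2⟩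
    exact (hNF.not_S_of_D hAD hCD h1) ((hside u v hH).mpr (hNF.S_of_C hBC hCD h2))
  obtain ⟨d, he, hp, hmaster, hpolS, hpolT⟩ := polarize hHG hcross hc (Ne.symm hCD) hfree
  have hval : ∀ v, (c v = D → d v = C) ∧ (c v = C → d v = D) ∧
      (c v ≠ D → c v ≠ C → d v = c v) := by
    intro v
    refine ⟨?_, ?_, ?_⟩
    · intro h
      rcases hmaster v with h' | ⟨_, h'⟩
      · exact absurd (h ▸ h') (hpolT v (hNF.not_S_of_D hAD hCD h))
      · exact h'.resolve_left (hpolT v (hNF.not_S_of_D hAD hCD h))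
    · intro h
      rcases hmaster v with h' | ⟨_, h'⟩
      · exact absurd (h ▸ h') (hpolS v (hNF.S_of_C hBC hCD h))
      · exact h'.resolve_right (hpolS v (hNF.S_of_C hBC hCD h))
    · intro h1 h2
      rcases hmaster v with h' | ⟨h', _⟩
      · exact h'
      · rcases h' with h' | h'
        · exact absurd h' h1
        · exact absurd h' h2
  refine ⟨d, he, hp, ?_, ?_, ?_, ?_⟩
  · intro v hv
    rcases hNF.1 v hv with h | h
    · exact Or.inl (((hval v).2.2 (fun h' => hAD (h.symm.trans h'))
        (fun h' => hAC (h.symm.trans h'))).trans h)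
    · exact Or.inr ((hval v).2.1 h)
  · intro v hv
    rcases hNF.2.1 v hv with h | h
    · exact Or.inl (((hval v).2.2 (fun h' => hBD (h.symm.trans h'))
        (fun h' => hBC (h.symm.trans h'))).trans h)
    · exact Or.inr ((hval v).1 h)
  · intro v hv
    have hcv : c v = C := by
      by_cases h1 : c v = D
      · exact absurd (((hval v).1 h1).symm.trans hv) hCD
      · by_cases h2 : c v = C
        · exact h2
        · exact absurd ((hval v).2.2 h1 h2 |>.symm.trans hv) h1
    obtain ⟨u, hu1, hu2⟩ := hNF.2.2.1 v hcv
    refine ⟨u, hu1, ?_⟩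
    exact ((hval u).2.2 (fun h' => hAD (hu2.symm.trans h'))
      (fun h' => hAC (hu2.symm.trans h'))).trans hu2
  · intro v hv
    have hcv : c v = D := by
      by_cases h1 : c v = D
      · exact h1
      · by_cases h2 : c v = C
        · exact absurd (((hval v).2.1 h2).symm.trans hv) hCD.symm
        · exact absurd (((hval v).2.2 h1 h2).symm.trans hv) h2
    obtain ⟨u, hu1, hu2⟩ := hNF.2.2.2 v hcv
    refine ⟨u, hu1, ?_⟩
    exact ((hval u).2.2 (fun h' => hBD (hu2.symm.trans h'))
      (fun h' => hBC (hu2.symm.trans h'))).trans hu2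

end Gswaps

/-- pick two colors distinct from two given ones. -/
lemma exists_pair_notin (hk : 4 ≤ k) (α β : Fin k) :
    ∃ σ τ : Fin k, σ ≠ τ ∧ σ ≠ α ∧ σ ≠ β ∧ τ ≠ α ∧ τ ≠ β := by
  classical
  have h1 : ({α, β} : Finset (Fin k)).card ≤ 2 := by
    apply le_trans (Finset.card_insert_le _ _)
    simp
  have h2 : 1 < (({α, β} : Finset (Fin k))ᶜ).card := by
    rw [Finset.card_compl, Fintype.card_fin]
    omega
  obtain ⟨σ, hσ, τ, hτ, hne⟩ := Finset.one_lt_card.mp h2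
  simp only [Finset.mem_compl, Finset.mem_insert, Finset.mem_singleton, not_or] at hσ hτ
  exact ⟨σ, τ, hne, hσ.1, hσ.2, hτ.1, hτ.2⟩

section Canon
variable [Fintype V]

/-- rename one of the roles to an unused color. -/
lemma renameRole {A B C D x y : Fin k} (hc : IsProperColoring G k c)
    (hNF : NF S H c A B C D)
    (hA : A ≠ x) (hB : B ≠ x) (hC : C ≠ x) (hD : D ≠ x) (hyx : y ≠ x) :
    ∃ d, KempeEquiv G c d ∧ IsProperColoring G k d ∧
      NF S H d (if A = y then x else A) (if B = y then x else B)
        (if C = y then x else C) (if D = y then x else D) := by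
  have hunused : ∀ v, c v ≠ x := by
    intro v
    by_cases hv : v ∈ S
    · rcases hNF.1 v hv with h | h <;> rw [h] <;> assumption
    · rcases hNF.2.1 v hv with h | h <;> rw [h] <;> assumption
  obtain ⟨d, he, hp, hd⟩ := renameColor hc hyx hunused
  exact ⟨d, he, hp, hNF.rename hd hA hB hC hD⟩

/-- bring a prescribed color into the first role. -/
lemma stage_first {A B C D q0 : Fin k} (hHG : H ≤ G)
    (hcross : ∀ u v : V, G.Adj u v → ¬ H.Adj u v → (u ∈ S ↔ v ∉ S))
    (hside : ∀ u v : V, H.Adj u v → (u ∈ S ↔ v ∈ S)) (hc : IsProperColoring G k c)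
    (hNF : NF S H c A B C D)
    (hAB : A ≠ B) (hAC : A ≠ C) (hAD : A ≠ D) (hBC : B ≠ C) (hBD : B ≠ D) (hCD : C ≠ D) :
    ∃ d B' C' D', KempeEquiv G c d ∧ IsProperColoring G k d ∧ NF S H d q0 B' C' D' ∧
      q0 ≠ B' ∧ q0 ≠ C' ∧ q0 ≠ D' ∧ B' ≠ C' ∧ B' ≠ D' ∧ C' ≠ D' := by
  by_cases hA : A = q0
  · subst hA
    exact ⟨c, B, C, D, Relation.ReflTransGen.refl, hc, hNF, hAB, hAC, hAD, hBC, hBD, hCD⟩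
  by_cases hB : B = q0
  · subst hB
    obtain ⟨d, he, hp, hNF'⟩ := gswapAB hHG hcross hside hc hAB hAC hAD hBC hBD hCD hNF
    exact ⟨d, A, C, D, he, hp, hNF', hAB.symm, hBC, hBD, hAC, hAD, hCD⟩
  by_cases hC : C = q0
  · subst hC
    obtain ⟨d1, he1, hp1, hNF1⟩ := gswapBC hHG hcross hside hc hAB hAC hAD hBC hBD hCD hNF
    obtain ⟨d2, he2, hp2, hNF2⟩ := gswapAB hHG hcross hside hp1 hAC hAB hAD hBC.symm hCD hBD hNF1
    exact ⟨d2, A, B, D, kempeEquiv_trans he1 he2, hp2, hNF2,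
      hAC.symm, hBC.symm, hCD, hAB, hAD, hBD⟩
  by_cases hD : D = q0
  · subst hD
    obtain ⟨d1, he1, hp1, hNF1⟩ := gswapCD hHG hcross hside hc hAB hAC hAD hBC hBD hCD hNF
    obtain ⟨d2, he2, hp2, hNF2⟩ :=
      gswapBC hHG hcross hside hp1 hAB hAD hAC hBD hBC hCD.symm hNF1
    obtain ⟨d3, he3, hp3, hNF3⟩ :=
      gswapAB hHG hcross hside hp2 hAD hAB hAC hBD.symm hCD.symm hBC hNF2
    exact ⟨d3, A, B, C, kempeEquiv_trans he1 (kempeEquiv_trans he2 he3), hp3, hNF3,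
      hAD.symm, hBD.symm, hCD.symm, hAB, hAC, hBC⟩
  · obtain ⟨d, he, hp, hNF'⟩ := renameRole hc hNF hA hB hC hD
      (y := A) (x := q0) hA
    rw [if_pos rfl, if_neg (fun h : B = A => hAB h.symm),
      if_neg (fun h : C = A => hAC h.symm), if_neg (fun h : D = A => hAD h.symm)] at hNF'
    exact ⟨d, B, C, D, he, hp, hNF',
      fun h => hB h.symm, fun h => hC h.symm, fun h => hD h.symm, hBC, hBD, hCD⟩

/-- bring a prescribed color into the second role, fixing the first. -/
lemma stage_second {A B C D q1 : Fin k} (hHG : H ≤ G)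
    (hcross : ∀ u v : V, G.Adj u v → ¬ H.Adj u v → (u ∈ S ↔ v ∉ S))
    (hside : ∀ u v : V, H.Adj u v → (u ∈ S ↔ v ∈ S)) (hc : IsProperColoring G k c)
    (hNF : NF S H c A B C D) (hq1 : q1 ≠ A)
    (hAB : A ≠ B) (hAC : A ≠ C) (hAD : A ≠ D) (hBC : B ≠ C) (hBD : B ≠ D) (hCD : C ≠ D) :
    ∃ d C' D', KempeEquiv G c d ∧ IsProperColoring G k d ∧ NF S H d A q1 C' D' ∧
      A ≠ q1 ∧ A ≠ C' ∧ A ≠ D' ∧ q1 ≠ C' ∧ q1 ≠ D' ∧ C' ≠ D' := by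
  by_cases hB : B = q1
  · subst hB
    exact ⟨c, C, D, Relation.ReflTransGen.refl, hc, hNF, hAB, hAC, hAD, hBC, hBD, hCD⟩
  by_cases hC : C = q1
  · subst hC
    obtain ⟨d, he, hp, hNF'⟩ := gswapBC hHG hcross hside hc hAB hAC hAD hBC hBD hCD hNF
    exact ⟨d, B, D, he, hp, hNF', hAC, hAB, hAD, hBC.symm, hCD, hBD⟩
  by_cases hD : D = q1
  · subst hD
    obtain ⟨d1, he1, hp1, hNF1⟩ := gswapCD hHG hcross hside hc hAB hAC hAD hBC hBD hCD hNF
    obtain ⟨d2, he2, hp2, hNF2⟩ :=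
      gswapBC hHG hcross hside hp1 hAB hAD hAC hBD hBC hCD.symm hNF1
    exact ⟨d2, B, C, kempeEquiv_trans he1 he2, hp2, hNF2,
      hAD, hAB, hAC, hBD.symm, hCD.symm, hBC⟩
  · obtain ⟨d, he, hp, hNF'⟩ := renameRole hc hNF
      (x := q1) (fun h => hq1 h.symm) (hB) (hC) (hD) (y := B) hB
    rw [if_neg (fun h : A = B => hAB h), if_pos rfl,
      if_neg (fun h : C = B => hBC h.symm), if_neg (fun h : D = B => hBD h.symm)] at hNF'
    exact ⟨d, C, D, he, hp, hNF', fun h => hq1 h.symm, hAC, hAD,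
      fun h => hC h.symm, fun h => hD h.symm, hCD⟩

/-- bring a prescribed color into the third role, fixing the first two. -/
lemma stage_third {A B C D q2 : Fin k} (hHG : H ≤ G)
    (hcross : ∀ u v : V, G.Adj u v → ¬ H.Adj u v → (u ∈ S ↔ v ∉ S))
    (hside : ∀ u v : V, H.Adj u v → (u ∈ S ↔ v ∈ S)) (hc : IsProperColoring G k c)
    (hNF : NF S H c A B C D) (hq2A : q2 ≠ A) (hq2B : q2 ≠ B)
    (hAB : A ≠ B) (hAC : A ≠ C) (hAD : A ≠ D) (hBC : B ≠ C) (hBD : B ≠ D) (hCD : C ≠ D) :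
    ∃ d D', KempeEquiv G c d ∧ IsProperColoring G k d ∧ NF S H d A B q2 D' ∧
      A ≠ B ∧ A ≠ q2 ∧ A ≠ D' ∧ B ≠ q2 ∧ B ≠ D' ∧ q2 ≠ D' := by
  by_cases hC : C = q2
  · subst hC
    exact ⟨c, D, Relation.ReflTransGen.refl, hc, hNF, hAB, hAC, hAD, hBC, hBD, hCD⟩
  by_cases hD : D = q2
  · subst hD
    obtain ⟨d, he, hp, hNF'⟩ := gswapCD hHG hcross hside hc hAB hAC hAD hBC hBD hCD hNF
    exact ⟨d, C, he, hp, hNF', hAB, hAD, hAC, hBD, hBC, hCD.symm⟩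
  · obtain ⟨d, he, hp, hNF'⟩ := renameRole hc hNF
      (x := q2) (fun h => hq2A h.symm) (fun h => hq2B h.symm) (hC) (hD) (y := C) hC
    rw [if_neg (fun h : A = C => hAC h), if_neg (fun h : B = C => hBC h),
      if_pos rfl, if_neg (fun h : D = C => hCD h.symm)] at hNF'
    exact ⟨d, D, he, hp, hNF', hAB, fun h => hq2A h.symm, hAD,
      fun h => hq2B h.symm, hBD, fun h => hD h.symm⟩

/-- bring a prescribed color into the fourth role, fixing the first three. -/
lemma stage_fourth {A B C D q3 : Fin k} (hHG : H ≤ G)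
    (hcross : ∀ u v : V, G.Adj u v → ¬ H.Adj u v → (u ∈ S ↔ v ∉ S))
    (hside : ∀ u v : V, H.Adj u v → (u ∈ S ↔ v ∈ S)) (hc : IsProperColoring G k c)
    (hNF : NF S H c A B C D) (hq3A : q3 ≠ A) (hq3B : q3 ≠ B) (hq3C : q3 ≠ C)
    (hAB : A ≠ B) (hAC : A ≠ C) (hAD : A ≠ D) (hBC : B ≠ C) (hBD : B ≠ D) (hCD : C ≠ D) :
    ∃ d, KempeEquiv G c d ∧ IsProperColoring G k d ∧ NF S H d A B C q3 := by
  by_cases hD : D = q3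
  · subst hD
    exact ⟨c, Relation.ReflTransGen.refl, hc, hNF⟩
  · obtain ⟨d, he, hp, hNF'⟩ := renameRole hc hNF
      (x := q3) (fun h => hq3A h.symm) (fun h => hq3B h.symm) (fun h => hq3C h.symm)
      (hD) (y := D) hD
    rw [if_neg (fun h : A = D => hAD h), if_neg (fun h : B = D => hBD h),
      if_neg (fun h : C = D => hCD h), if_pos rfl] at hNF'
    exact ⟨d, he, hp, hNF'⟩

/-- canonicalize the four roles to prescribed pairwise distinct colors. -/
lemma nf_canon {A B C D q0 q1 q2 q3 : Fin k} (hHG : H ≤ G)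
    (hcross : ∀ u v : V, G.Adj u v → ¬ H.Adj u v → (u ∈ S ↔ v ∉ S))
    (hside : ∀ u v : V, H.Adj u v → (u ∈ S ↔ v ∈ S)) (hc : IsProperColoring G k c)
    (hNF : NF S H c A B C D)
    (hAB : A ≠ B) (hAC : A ≠ C) (hAD : A ≠ D) (hBC : B ≠ C) (hBD : B ≠ D) (hCD : C ≠ D)
    (h01 : q0 ≠ q1) (h02 : q0 ≠ q2) (h03 : q0 ≠ q3) (h12 : q1 ≠ q2) (h13 : q1 ≠ q3)
    (h23 : q2 ≠ q3) :
    ∃ d, KempeEquiv G c d ∧ IsProperColoring G k d ∧ NF S H d q0 q1 q2 q3 := by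
  obtain ⟨d1, B1, C1, D1, he1, hp1, hNF1, g1, g2, g3, g4, g5, g6⟩ :=
    stage_first hHG hcross hside (q0 := q0) hc hNF hAB hAC hAD hBC hBD hCD
  obtain ⟨d2, C2, D2, he2, hp2, hNF2, f1, f2, f3, f4, f5, f6⟩ :=
    stage_second hHG hcross hside (q1 := q1) hp1 hNF1 h01.symm g1 g2 g3 g4 g5 g6
  obtain ⟨d3, D3, he3, hp3, hNF3, e1, e2, e3, e4, e5, e6⟩ :=
    stage_third hHG hcross hside (q2 := q2) hp2 hNF2 h02.symm h12.symm f1 f2 f3 f4 f5 f6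
  obtain ⟨d4, he4, hp4, hNF4⟩ :=
    stage_fourth hHG hcross hside (q3 := q3) hp3 hNF3 h03.symm h13.symm h23.symm
      e1 e2 e3 e4 e5 e6
  exact ⟨d4, kempeEquiv_trans he1 (kempeEquiv_trans he2 (kempeEquiv_trans he3 he4)),
    hp4, hNF4⟩
end Canon

/-- two normal forms with the same roles are Kempe equivalent. -/
lemma flipSync [Fintype V] {c c' : V → Fin k} {A B C D : Fin k}
    (hHG : H ≤ G)
    (hcross : ∀ u v : V, G.Adj u v → ¬ H.Adj u v → (u ∈ S ↔ v ∉ S))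
    (hside : ∀ u v : V, H.Adj u v → (u ∈ S ↔ v ∈ S))
    (hmatch : ∀ u v w : V, H.Adj u v → H.Adj u w → v = w)
    (hAB : A ≠ B) (hAC : A ≠ C) (hAD : A ≠ D) (hBC : B ≠ C) (hBD : B ≠ D) (hCD : C ≠ D)
    (hc : IsProperColoring G k c) (hc' : IsProperColoring G k c')
    (hNF : NF S H c A B C D) (hNF' : NF S H c' A B C D) :
    KempeEquiv G c c' := by
  classical
  set inv : (V → Fin k) → Prop :=
    fun d => IsProperColoring G k d ∧ NF S H d A B C D with hinv
  set bad : (V → Fin k) → Set V := fun d => {v | d v ≠ c' v} with hbad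
  have hsame : ∀ u v, G.Adj u v → (u ∈ S ↔ v ∈ S) → H.Adj u v := by
    intro u v hadj hiff
    by_contra hH
    have := hcross u v hadj hH
    tauto
  have hstep : ∀ d, inv d → (bad d).ncard ≠ 0 →
      ∃ e, KempeStep G d e ∧ inv e ∧ (bad e).ncard < (bad d).ncard := by
    intro d hd hμ
    obtain ⟨v₀, hv₀⟩ := Set.nonempty_of_ncard_ne_zero hμ
    have hv₀ne : d v₀ ≠ c' v₀ := hv₀
    by_cases hv₀S : v₀ ∈ S
    -- side S : colors A, C
    · have hdv : d v₀ = A ∨ d v₀ = C := hd.2.1 v₀ hv₀S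
      have hcv : c' v₀ = A ∨ c' v₀ = C := hNF'.1 v₀ hv₀S
      -- find the partner u
      have hpart : ∃ u, H.Adj v₀ u ∧ ((d v₀ = A ∧ d u = C) ∨ (d v₀ = C ∧ d u = A)) := by
        rcases hdv with h | h
        · have hcvC : c' v₀ = C := by
            rcases hcv with h' | h'
            · exact absurd (h.trans h'.symm) hv₀ne
            · exact h'
          obtain ⟨u, hu1, hu2⟩ := hNF'.2.2.1 v₀ hcvC
          have huS : u ∈ S := (hside v₀ u hu1).mp hv₀S
          have hdu : d u = A ∨ d u = C := hd.2.1 u huS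
          have hduC : d u = C := by
            rcases hdu with h' | h'
            · exact absurd (h.trans h'.symm) (hd.1 (hHG hu1))
            · exact h'
          exact ⟨u, hu1, Or.inl ⟨h, hduC⟩⟩
        · obtain ⟨u, hu1, hu2⟩ := hd.2.2.2.1 v₀ h
          exact ⟨u, hu1, Or.inr ⟨h, hu2⟩⟩
      obtain ⟨u, huH, hcolors⟩ := hpart
      have huS : u ∈ S := (hside v₀ u huH).mp hv₀S
      have hvu : v₀ ≠ u := H.ne_of_adj huH
      have hdvu : d v₀ ≠ d u := hd.1 (hHG huH)
      have hACset : ∀ x, x ≠ u → G.Adj v₀ x → ¬(d x = d v₀ ∨ d x = d u) := by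
        intro x hxu hadj hmem
        by_cases hxS : x ∈ S
        · exact hxu (hmatch v₀ x u (hsame v₀ x hadj (iff_of_true hv₀S hxS)) huH)
        · have hdx : d x = B ∨ d x = D := hd.2.2.1 x hxS
          rcases hcolors with ⟨h1, h2⟩ | ⟨h1, h2⟩ <;> rw [h1, h2] at hmem <;>
            rcases hdx with h3 | h3 <;> rw [h3] at hmem <;>
            rcases hmem with h4 | h4 <;>
            first
              | exact hAB h4 | exact hAB h4.symm | exact hAD h4 | exact hAD h4.symm
              | exact hBC h4 | exact hBC h4.symm | exact hCD h4 | exact hCD h4.symm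
      have hACset' : ∀ x, x ≠ v₀ → G.Adj u x → ¬(d x = d v₀ ∨ d x = d u) := by
        intro x hxv hadj hmem
        by_cases hxS : x ∈ S
        · exact hxv (hmatch u x v₀ (hsame u x hadj (iff_of_true huS hxS)) huH.symm)
        · have hdx : d x = B ∨ d x = D := hd.2.2.1 x hxS
          rcases hcolors with ⟨h1, h2⟩ | ⟨h1, h2⟩ <;> rw [h1, h2] at hmem <;>
            rcases hdx with h3 | h3 <;> rw [h3] at hmem <;>
            rcases hmem with h4 | h4 <;>
            first
              | exact hAB h4 | exact hAB h4.symm | exact hAD h4 | exact hAD h4.symm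
              | exact hBC h4 | exact hBC h4.symm | exact hCD h4 | exact hCD h4.symm
      obtain ⟨e, hks, hep, hev, heu, hefix⟩ := pairFlip hd.1 hHG huH hdvu rfl rfl
        (fun x hadj hxu => hACset x hxu hadj) (fun x hadj hxv => hACset' x hxv hadj)
      -- the new colors are exactly those of c' on v₀, u
      have hcvu : c' v₀ = d u ∧ c' u = d v₀ := by
        have hcu : c' u = A ∨ c' u = C := hNF'.1 u huS
        have hcne : c' v₀ ≠ c' u := hc' (hHG huH)
        constructor
        · rcases hcolors with ⟨h1, h2⟩ | ⟨h1, h2⟩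
          · rw [h2]
            rcases hcv with h | h
            · exact absurd (h1.trans h.symm) hv₀ne
            · exact h
          · rw [h2]
            rcases hcv with h | h
            · exact h
            · exact absurd (h1.trans h.symm) hv₀ne
        · rcases hcolors with ⟨h1, h2⟩ | ⟨h1, h2⟩
          · rw [h1]
            have hcvC : c' v₀ = C := by
              rcases hcv with h | h
              · exact absurd (h1.trans h.symm) hv₀ne
              · exact h
            rcases hcu with h | h
            · exact h
            · exact absurd (hcvC.trans h.symm) hcne
          · rw [h1]
            have hcvA : c' v₀ = A := by
              rcases hcv with h | h
              · exact h
              · exact absurd (h1.trans h.symm) hv₀ne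
            rcases hcu with h | h
            · exact absurd (hcvA.trans h.symm) hcne
            · exact h
      refine ⟨e, hks, ⟨hep, ?_, ?_, ?_, ?_⟩, ?_⟩
      · intro v hv
        by_cases h1 : v = v₀
        · subst h1; rw [hev]
          rcases hcolors with ⟨_, h2⟩ | ⟨_, h2⟩
          · exact Or.inr h2
          · exact Or.inl h2
        · by_cases h2 : v = u
          · subst h2; rw [heu]
            rcases hcolors with ⟨h3, _⟩ | ⟨h3, _⟩
            · exact Or.inl h3
            · exact Or.inr h3
          · rw [hefix v h1 h2]; exact hd.2.1 v hv
      · intro v hv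
        have h1 : v ≠ v₀ := fun h => hv (h ▸ hv₀S)
        have h2 : v ≠ u := fun h => hv (h ▸ huS)
        rw [hefix v h1 h2]; exact hd.2.2.1 v hv
      · intro v hv
        by_cases h1 : v = v₀
        · subst h1
          rw [hev] at hv
          refine ⟨u, huH, ?_⟩
          rw [heu]
          rcases hcolors with ⟨h3, h4⟩ | ⟨h3, h4⟩
          · exact h3
          · exact absurd (h4.symm.trans hv) hAC
        · by_cases h2 : v = u
          · subst h2
            rw [heu] at hv
            refine ⟨v₀, huH.symm, ?_⟩
            rw [hev]
            rcases hcolors with ⟨h3, h4⟩ | ⟨h3, h4⟩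
            · exact absurd (h3.symm.trans hv) hAC
            · exact h4
          · rw [hefix v h1 h2] at hv
            obtain ⟨p, hp1, hp2⟩ := hd.2.2.2.1 v hv
            have hpv : p ≠ v₀ := by
              intro h; subst h
              exact h2 (hmatch p v u hp1.symm huH)
            have hpu : p ≠ u := by
              intro h; subst h
              exact h1 (hmatch p v v₀ hp1.symm huH.symm)
            exact ⟨p, hp1, (hefix p hpv hpu).symm ▸ hp2⟩
      · intro v hv
        have h1 : v ≠ v₀ := by
          intro h; subst h
          rw [hev] at hv
          rcases hcolors with ⟨_, h2⟩ | ⟨_, h2⟩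
          · exact hCD (h2.symm.trans hv)
          · exact hAD (h2.symm.trans hv)
        have h2 : v ≠ u := by
          intro h; subst h
          rw [heu] at hv
          rcases hcolors with ⟨h3, _⟩ | ⟨h3, _⟩
          · exact hAD (h3.symm.trans hv)
          · exact hCD (h3.symm.trans hv)
        rw [hefix v h1 h2] at hv
        obtain ⟨p, hp1, hp2⟩ := hd.2.2.2.2 v hv
        have hpv : p ≠ v₀ := by
          intro h
          rw [h] at hp2
          rcases hd.2.1 v₀ hv₀S with h3 | h3
          · exact hAB (h3.symm.trans hp2)
          · exact hBC (h3.symm.trans hp2).symm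
        have hpu : p ≠ u := by
          intro h
          rw [h] at hp2
          rcases hd.2.1 u huS with h3 | h3
          · exact hAB (h3.symm.trans hp2)
          · exact hBC (h3.symm.trans hp2).symm
        exact ⟨p, hp1, (hefix p hpv hpu).symm ▸ hp2⟩
      · -- measure decreases
        have hsubset : bad e ⊆ bad d \ {v₀} := by
          intro v hv
          by_cases h1 : v = v₀
          · subst h1
            exfalso
            rw [hbad, Set.mem_setOf_eq, hev] at hv
            exact hv hcvu.1.symm
          · by_cases h2 : v = u
            · subst h2
              exfalso
              rw [hbad, Set.mem_setOf_eq, heu] at hv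
              exact hv hcvu.2.symm
            · rw [hbad, Set.mem_setOf_eq, hefix v h1 h2] at hv
              exact ⟨hv, by simpa using h1⟩
        have hnotin : v₀ ∉ bad e := by
          rw [hbad, Set.mem_setOf_eq, hev]
          intro h
          exact h hcvu.1.symm
        have hss : bad e ⊂ bad d :=
          (Set.ssubset_iff_of_subset (hsubset.trans Set.diff_subset)).mpr
            ⟨v₀, hv₀, hnotin⟩
        exact Set.ncard_lt_ncard hss (Set.toFinite _)
    -- side Sᶜ : colors B, D (mirror case)
    · have hdv : d v₀ = B ∨ d v₀ = D := hd.2.2.1 v₀ hv₀S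
      have hcv : c' v₀ = B ∨ c' v₀ = D := hNF'.2.1 v₀ hv₀S
      have hpart : ∃ u, H.Adj v₀ u ∧ ((d v₀ = B ∧ d u = D) ∨ (d v₀ = D ∧ d u = B)) := by
        rcases hdv with h | h
        · have hcvD : c' v₀ = D := by
            rcases hcv with h' | h'
            · exact absurd (h.trans h'.symm) hv₀ne
            · exact h'
          obtain ⟨u, hu1, hu2⟩ := hNF'.2.2.2 v₀ hcvD
          have huS : u ∉ S := fun h' => hv₀S ((hside v₀ u hu1).mpr h')
          have hdu : d u = B ∨ d u = D := hd.2.2.1 u huS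
          have hduD : d u = D := by
            rcases hdu with h' | h'
            · exact absurd (h.trans h'.symm) (hd.1 (hHG hu1))
            · exact h'
          exact ⟨u, hu1, Or.inl ⟨h, hduD⟩⟩
        · obtain ⟨u, hu1, hu2⟩ := hd.2.2.2.2 v₀ h
          exact ⟨u, hu1, Or.inr ⟨h, hu2⟩⟩
      obtain ⟨u, huH, hcolors⟩ := hpart
      have huS : u ∉ S := fun h' => hv₀S ((hside v₀ u huH).mpr h')
      have hvu : v₀ ≠ u := H.ne_of_adj huH
      have hdvu : d v₀ ≠ d u := hd.1 (hHG huH)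
      have hACset : ∀ x, x ≠ u → G.Adj v₀ x → ¬(d x = d v₀ ∨ d x = d u) := by
        intro x hxu hadj hmem
        by_cases hxS : x ∈ S
        · have hdx : d x = A ∨ d x = C := hd.2.1 x hxS
          rcases hcolors with ⟨h1, h2⟩ | ⟨h1, h2⟩ <;> rw [h1, h2] at hmem <;>
            rcases hdx with h3 | h3 <;> rw [h3] at hmem <;>
            rcases hmem with h4 | h4 <;>
            first
              | exact hAB h4 | exact hAB h4.symm | exact hAD h4 | exact hAD h4.symm
              | exact hBC h4 | exact hBC h4.symm | exact hCD h4 | exact hCD h4.symm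
        · exact hxu (hmatch v₀ x u
            (hsame v₀ x hadj (iff_of_false hv₀S hxS)) huH)
      have hACset' : ∀ x, x ≠ v₀ → G.Adj u x → ¬(d x = d v₀ ∨ d x = d u) := by
        intro x hxv hadj hmem
        by_cases hxS : x ∈ S
        · have hdx : d x = A ∨ d x = C := hd.2.1 x hxS
          rcases hcolors with ⟨h1, h2⟩ | ⟨h1, h2⟩ <;> rw [h1, h2] at hmem <;>
            rcases hdx with h3 | h3 <;> rw [h3] at hmem <;>
            rcases hmem with h4 | h4 <;>
            first
              | exact hAB h4 | exact hAB h4.symm | exact hAD h4 | exact hAD h4.symm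
              | exact hBC h4 | exact hBC h4.symm | exact hCD h4 | exact hCD h4.symm
        · exact hxv (hmatch u x v₀
            (hsame u x hadj (iff_of_false huS hxS)) huH.symm)
      obtain ⟨e, hks, hep, hev, heu, hefix⟩ := pairFlip hd.1 hHG huH hdvu rfl rfl
        (fun x hadj hxu => hACset x hxu hadj) (fun x hadj hxv => hACset' x hxv hadj)
      have hcvu : c' v₀ = d u ∧ c' u = d v₀ := by
        have hcu : c' u = B ∨ c' u = D := hNF'.2.1 u huS
        have hcne : c' v₀ ≠ c' u := hc' (hHG huH)
        constructor
        · rcases hcolors with ⟨h1, h2⟩ | ⟨h1, h2⟩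
          · rw [h2]
            rcases hcv with h | h
            · exact absurd (h1.trans h.symm) hv₀ne
            · exact h
          · rw [h2]
            rcases hcv with h | h
            · exact h
            · exact absurd (h1.trans h.symm) hv₀ne
        · rcases hcolors with ⟨h1, h2⟩ | ⟨h1, h2⟩
          · rw [h1]
            have hcvD : c' v₀ = D := by
              rcases hcv with h | h
              · exact absurd (h1.trans h.symm) hv₀ne
              · exact h
            rcases hcu with h | h
            · exact h
            · exact absurd (hcvD.trans h.symm) hcne
          · rw [h1]
            have hcvB : c' v₀ = B := by
              rcases hcv with h | h
              · exact h
              · exact absurd (h1.trans h.symm) hv₀ne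
            rcases hcu with h | h
            · exact absurd (hcvB.trans h.symm) hcne
            · exact h
      refine ⟨e, hks, ⟨hep, ?_, ?_, ?_, ?_⟩, ?_⟩
      · intro v hv
        have h1 : v ≠ v₀ := fun h => hv₀S (h ▸ hv)
        have h2 : v ≠ u := fun h => huS (h ▸ hv)
        rw [hefix v h1 h2]; exact hd.2.1 v hv
      · intro v hv
        by_cases h1 : v = v₀
        · subst h1; rw [hev]
          rcases hcolors with ⟨_, h2⟩ | ⟨_, h2⟩
          · exact Or.inr h2
          · exact Or.inl h2
        · by_cases h2 : v = u
          · subst h2; rw [heu]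
            rcases hcolors with ⟨h3, _⟩ | ⟨h3, _⟩
            · exact Or.inl h3
            · exact Or.inr h3
          · rw [hefix v h1 h2]; exact hd.2.2.1 v hv
      · intro v hv
        have h1 : v ≠ v₀ := by
          intro h; subst h
          rw [hev] at hv
          rcases hcolors with ⟨_, h2⟩ | ⟨_, h2⟩
          · exact hCD (hv.symm.trans h2)
          · exact hBC (hv.symm.trans h2).symm
        have h2 : v ≠ u := by
          intro h; subst h
          rw [heu] at hv
          rcases hcolors with ⟨h3, _⟩ | ⟨h3, _⟩
          · exact hBC (hv.symm.trans h3).symm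
          · exact hCD (hv.symm.trans h3)
        rw [hefix v h1 h2] at hv
        obtain ⟨p, hp1, hp2⟩ := hd.2.2.2.1 v hv
        have hpv : p ≠ v₀ := by
          intro h
          rw [h] at hp2
          rcases hd.2.2.1 v₀ hv₀S with h3 | h3
          · exact hAB (hp2.symm.trans h3)
          · exact hAD (hp2.symm.trans h3)
        have hpu : p ≠ u := by
          intro h
          rw [h] at hp2
          rcases hd.2.2.1 u huS with h3 | h3
          · exact hAB (hp2.symm.trans h3)
          · exact hAD (hp2.symm.trans h3)
        exact ⟨p, hp1, (hefix p hpv hpu).symm ▸ hp2⟩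
      · intro v hv
        by_cases h1 : v = v₀
        · subst h1
          rw [hev] at hv
          refine ⟨u, huH, ?_⟩
          rw [heu]
          rcases hcolors with ⟨h3, h4⟩ | ⟨h3, h4⟩
          · exact h3
          · exact absurd (h4.symm.trans hv) hBD
        · by_cases h2 : v = u
          · subst h2
            rw [heu] at hv
            refine ⟨v₀, huH.symm, ?_⟩
            rw [hev]
            rcases hcolors with ⟨h3, h4⟩ | ⟨h3, h4⟩
            · exact absurd (h3.symm.trans hv) hBD
            · exact h4
          · rw [hefix v h1 h2] at hv
            obtain ⟨p, hp1, hp2⟩ := hd.2.2.2.2 v hv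
            have hpv : p ≠ v₀ := by
              intro h; subst h
              exact h2 (hmatch p v u hp1.symm huH)
            have hpu : p ≠ u := by
              intro h; subst h
              exact h1 (hmatch p v v₀ hp1.symm huH.symm)
            exact ⟨p, hp1, (hefix p hpv hpu).symm ▸ hp2⟩
      · have hsubset : bad e ⊆ bad d \ {v₀} := by
          intro v hv
          by_cases h1 : v = v₀
          · subst h1
            exfalso
            rw [hbad, Set.mem_setOf_eq, hev] at hv
            exact hv hcvu.1.symm
          · by_cases h2 : v = u
            · subst h2
              exfalso
              rw [hbad, Set.mem_setOf_eq, heu] at hv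
              exact hv hcvu.2.symm
            · rw [hbad, Set.mem_setOf_eq, hefix v h1 h2] at hv
              exact ⟨hv, by simpa using h1⟩
        have hnotin : v₀ ∉ bad e := by
          rw [hbad, Set.mem_setOf_eq, hev]
          intro h
          exact h hcvu.1.symm
        have hss : bad e ⊂ bad d :=
          (Set.ssubset_iff_of_subset (hsubset.trans Set.diff_subset)).mpr
            ⟨v₀, hv₀, hnotin⟩
        exact Set.ncard_lt_ncard hss (Set.toFinite _)
  obtain ⟨d, hd1, hd2, hd3⟩ := greedy hstep ((bad c).ncard) c ⟨hc, hNF⟩ le_rfl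
  have hempty : bad d = ∅ := (Set.ncard_eq_zero (Set.toFinite _)).mp hd3
  have : d = c' := by
    funext v
    by_contra h
    have : v ∈ bad d := h
    rw [hempty] at this
    exact this
  exact this ▸ hd1

end KempeAux

/-- For a `B + M_ℓ` graph (the added edges form a matching inside the
parts) with `k ≥ 4` and `ℓ < k(k-1)/2`, every two proper `k`-colorings are Kempe
equivalent. -/
theorem kempe_equiv_of_BplusM {V : Type*} [Fintype V]
    (G : SimpleGraph V) (S : Set V) (H : SimpleGraph V) (hBE : IsBPlusE G S H)
    (hmatch : ∀ u v w : V, H.Adj u v → H.Adj u w → v = w)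
    (ℓ k : ℕ) (hcard : H.edgeSet.ncard = ℓ) (hk : 4 ≤ k) (hℓ : ℓ < k * (k - 1) / 2)
    (c c' : V → Fin k) (hc : IsProperColoring G k c) (hc' : IsProperColoring G k c') :
    KempeEquiv G c c' := by
  classical
  open KempeAux in
  obtain ⟨hHG, hcross, hside⟩ := hBE
  have hsameS : ∀ u v, G.Adj u v → ((u ∈ S) ↔ (v ∈ S)) → H.Adj u v := by
    intro u v hadj hiff
    by_contra hH
    have := hcross u v hadj hH
    tauto
  have hPsideT : ∀ u v : V, G.Adj u v → ((u ∉ S) ↔ (v ∉ S)) → H.Adj u v := by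
    intro u v hadj hiff
    exact hsameS u v hadj (by tauto)
  -- canonical target colors
  set q0 : Fin k := ⟨0, by omega⟩ with hq0
  set q1 : Fin k := ⟨1, by omega⟩ with hq1
  set q2 : Fin k := ⟨2, by omega⟩ with hq2
  set q3 : Fin k := ⟨3, by omega⟩ with hq3
  have hq01 : q0 ≠ q1 := by simp [hq0, hq1, Fin.ext_iff]
  have hq02 : q0 ≠ q2 := by simp [hq0, hq2, Fin.ext_iff]
  have hq03 : q0 ≠ q3 := by simp [hq0, hq3, Fin.ext_iff]
  have hq12 : q1 ≠ q2 := by simp [hq1, hq2, Fin.ext_iff]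
  have hq13 : q1 ≠ q3 := by simp [hq1, hq3, Fin.ext_iff]
  have hq23 : q2 ≠ q3 := by simp [hq2, hq3, Fin.ext_iff]
  suffices key : ∀ c₀ : V → Fin k, IsProperColoring G k c₀ →
      ∃ d, KempeEquiv G c₀ d ∧ IsProperColoring G k d ∧ NF S H d q0 q1 q2 q3 by
    obtain ⟨d, he, hp, hNF⟩ := key c hc
    obtain ⟨d', he', hp', hNF'⟩ := key c' hc'
    have hmid : KempeEquiv G d d' :=
      flipSync hHG hcross hside hmatch hq01 hq02 hq03 hq12 hq13 hq23 hp hp' hNF hNF'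
    exact kempeEquiv_trans he (kempeEquiv_trans hmid (kempeEquiv_symm he'))
  intro c₀ hc₀
  -- Step 1: a free pair exists by pigeonhole
  obtain ⟨α, β, hαβ, hfree⟩ := exists_free_pair hHG hc₀ hcard hℓ
  -- Step 2: polarize it
  obtain ⟨c₁, he₁, hp₁, hm₁, hpolS₁, hpolT₁⟩ := polarize hHG hcross hc₀ hαβ hfree
  -- Step 3: compress the T side towards β
  obtain ⟨c₂, he₂, hp₂, hfixS₂, hT₂, hcovT₂⟩ :=
    compressSide (P := fun v => v ∉ S) hPsideT hp₁ (β := β)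
      (fun v hv => hpolS₁ v (not_not.mp hv))
  have hpolS₂ : ∀ v ∈ S, c₂ v ≠ β := by
    intro v hv
    rw [hfixS₂ v (not_not_intro hv)]
    exact hpolS₁ v hv
  have hpolT₂ : ∀ v, v ∉ S → c₂ v ≠ α := by
    intro v hv
    rcases hT₂ v hv with h | h
    · rw [h]; exact hαβ.symm
    · rw [h]; exact hpolT₁ v hv
  -- Step 4: compress the S side towards α
  obtain ⟨c₃, he₃, hp₃, hfixT₃, hS₃, hcovS₃⟩ :=
    compressSide (P := fun v => v ∈ S) hsameS hp₂ (β := α) hpolT₂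
  have hpolS₃ : ∀ v ∈ S, c₃ v ≠ β := by
    intro v hv
    rcases hS₃ v hv with h | h
    · rw [h]; exact hαβ
    · rw [h]; exact hpolS₂ v hv
  have hpolT₃ : ∀ v, v ∉ S → c₃ v ≠ α := by
    intro v hv
    rw [hfixT₃ v hv]
    exact hpolT₂ v hv
  have hcovT₃ : ∀ v, v ∉ S → c₃ v ≠ β → ∃ u, H.Adj v u ∧ c₃ u = β := by
    intro v hv hvβ
    rw [hfixT₃ v hv] at hvβ
    obtain ⟨u, hu1, hu2⟩ := hcovT₂ v hv hvβ
    have huT : u ∉ S := fun h => hv ((hside v u hu1).mpr h)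
    exact ⟨u, hu1, by rw [hfixT₃ u huT]; exact hu2⟩
  -- Step 5: pick two more colors and polarize them
  obtain ⟨σ, τ, hστ, hσα, hσβ, hτα, hτβ⟩ := exists_pair_notin hk α β
  have hfree₂ : KFree H c₃ σ τ := by
    rintro u v hH ⟨h1, h2⟩
    by_cases huS : u ∈ S
    · obtain ⟨w, hw1, hw2⟩ := hcovS₃ u huS (by rw [h1]; exact hσα)
      have hwv : w = v := hmatch u w v hw1 hH
      rw [hwv] at hw2
      exact hτα (h2.symm.trans hw2)
    · obtain ⟨w, hw1, hw2⟩ := hcovT₃ u huS (by rw [h1]; exact hσβ)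
      have hwv : w = v := hmatch u w v hw1 hH
      rw [hwv] at hw2
      exact hτβ (h2.symm.trans hw2)
  obtain ⟨c₄, he₄, hp₄, hm₄, hpolS₄, hpolT₄⟩ := polarize hHG hcross hp₃ hστ hfree₂
  have hliftα : ∀ w, c₃ w = α → c₄ w = α := by
    intro w hw
    rcases hm₄ w with h | ⟨h1, _⟩
    · rw [h, hw]
    · exfalso
      rw [hw] at h1
      rcases h1 with h1 | h1
      · exact hσα h1.symm
      · exact hτα h1.symm
  have hliftβ : ∀ w, c₃ w = β → c₄ w = β := by
    intro w hw
    rcases hm₄ w with h | ⟨h1, _⟩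
    · rw [h, hw]
    · exfalso
      rw [hw] at h1
      rcases h1 with h1 | h1
      · exact hσβ h1.symm
      · exact hτβ h1.symm
  -- Step 6: retarget the S side to {α, σ}
  obtain ⟨c₅, he₅, hp₅, hfixT₅, hS₅, hσcl₅⟩ :=
    retargetSide (P := fun v => v ∈ S) hsameS hmatch hp₄ (hσα.symm)
      (by
        intro v hv
        by_cases h : c₃ v = α
        · exact Or.inl (hliftα v h)
        · obtain ⟨u, hu1, hu2⟩ := hcovS₃ v hv h
          exact Or.inr ⟨u, hu1, hliftα u hu2⟩)
      (fun v hv => hpolT₄ v hv)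
  -- Step 7: retarget the T side to {β, τ}
  obtain ⟨c₆, he₆, hp₆, hfixS₆, hT₆, hτcl₆⟩ :=
    retargetSide (P := fun v => v ∉ S) hPsideT hmatch hp₅ (hτβ.symm)
      (by
        intro v hv
        have h5 : c₅ v = c₄ v := hfixT₅ v hv
        by_cases h : c₃ v = β
        · exact Or.inl (by rw [h5]; exact hliftβ v h)
        · obtain ⟨u, hu1, hu2⟩ := hcovT₃ v hv h
          have huT : u ∉ S := fun hh => hv ((hside v u hu1).mpr hh)
          refine Or.inr ⟨u, hu1, ?_⟩
          rw [hfixT₅ u huT]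
          exact hliftβ u hu2)
      (by
        intro v hv
        have hvS : v ∈ S := not_not.mp hv
        rcases hS₅ v hvS with h | h
        · rw [h]; exact fun hh => hτα hh.symm
        · rw [h]; exact hστ)
  -- the normal form
  have hNF₆ : NF S H c₆ α β σ τ := by
    refine ⟨?_, ?_, ?_, ?_⟩
    · intro v hv
      rw [hfixS₆ v (not_not_intro hv)]
      exact hS₅ v hv
    · intro v hv
      exact hT₆ v hv
    · intro v hv
      have hvS : v ∈ S := by
        by_contra hvT
        rcases hT₆ v hvT with h | h
        · exact hσβ (hv.symm.trans h)
        · exact hστ (hv.symm.trans h)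
      have h6 : c₅ v = σ := by rw [← hfixS₆ v (not_not_intro hvS)]; exact hv
      obtain ⟨u, hu1, hu2⟩ := hσcl₅ v h6
      have huS : u ∈ S := (hside v u hu1).mp hvS
      exact ⟨u, hu1, by rw [hfixS₆ u (not_not_intro huS)]; exact hu2⟩
    · intro v hv
      exact hτcl₆ v hv
  -- Step 8: canonicalize the roles
  obtain ⟨c₇, he₇, hp₇, hNF₇⟩ := nf_canon hHG hcross hside hp₆ hNF₆
    hαβ hσα.symm hτα.symm hσβ.symm hτβ.symm hστ
    hq01 hq02 hq03 hq12 hq13 hq23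
  exact ⟨c₇, kempeEquiv_trans he₁ (kempeEquiv_trans he₂ (kempeEquiv_trans he₃
    (kempeEquiv_trans he₄ (kempeEquiv_trans he₅ (kempeEquiv_trans he₆ he₇))))),
    hp₇, hNF₇⟩
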